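/- arXiv:1509.04880 — 2 statements merged into one kernel-verified Lean document; each statement's English description precedes it below -/
import Mathlib

section
/- Let G be a 3-edge-connected graph, (T, X) a tree-cut decomposition of G with internal width at most 2w, and t a leaf of T with |X_t| ≥ 2w. Suppose (T*, X*) is a star tree-cut decomposition of G[X_t] with central node t_c and ℓ leaves such that its internal width is at most w, |X*_{t_c}| + ℓ ≤ w, and for every leaf node s of T*, Σ_{x ∈ ∂_G(X_t) ∩ X*_s} |δ_G({x}, V(G)∖X_t)| ≤ w. Then the tree-cut decomposition (T̃, X̃) obtained by replacing the leaf t of T by the star T* (attaching t_c to the former neighbor of t, and replacing bag X_t by the bags of X*) has internal width at most 2w, and has strictly more non-empty bags than (T, X). -/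
open scoped Classical

noncomputable section

/-- A multigraph on vertex type `V`: a set of vertices together with a multiset of
(undirected, loopless) edges, parallel edges being allowed. -/
structure MGraph (V : Type) where
  verts : Set V
  edges : Multiset (Sym2 V)

namespace MGraph

variable {V : Type}

/-- The degree of a vertex: the number of incident edges, with multiplicity. -/
def degree (G : MGraph V) (x : V) : ℕ :=
  (G.edges.filter (fun e => x ∈ e)).card

/-- The set of neighbours of a vertex. -/
def nbrSet (G : MGraph V) (x : V) : Set V :=
  {y | y ≠ x ∧ s(x, y) ∈ G.edges}

/-- `δ_G(A,B)`: the multiset of edges of `G` with one endpoint in `A` and the other in `B`. -/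
def cut (G : MGraph V) (A B : Set V) : Multiset (Sym2 V) :=
  G.edges.filter (fun e => ∃ a ∈ A, ∃ b ∈ B, e = s(a, b))

/-- Adjacency in a multigraph. -/
def Adj (G : MGraph V) (x y : V) : Prop := x ≠ y ∧ s(x, y) ∈ G.edges

/-- Connectivity of a multigraph. -/
def Connected (G : MGraph V) : Prop :=
  G.verts.Nonempty ∧ ∀ x ∈ G.verts, ∀ y ∈ G.verts, Relation.ReflTransGen G.Adj x y

/-- Deleting a (multi)set of edges from a multigraph. -/
def deleteEdges (G : MGraph V) (F : Multiset (Sym2 V)) : MGraph V :=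
  ⟨G.verts, G.edges - F⟩

/-- A multigraph is 3-edge-connected if it is connected and remains connected after
removal of any set of at most 2 edges. -/
def ThreeEdgeConnected (G : MGraph V) : Prop :=
  G.Connected ∧ ∀ F : Multiset (Sym2 V), F ≤ G.edges → Multiset.card F ≤ 2 →
    (G.deleteEdges F).Connected

/-- The induced sub-multigraph on a set of vertices. -/
def induce (G : MGraph V) (S : Set V) : MGraph V :=
  ⟨G.verts ∩ S, G.edges.filter (fun e => ∀ v ∈ e, v ∈ S)⟩

/-- `∂_G(S)`: the vertices of `S` having a neighbour outside of `S`. -/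
def boundary (G : MGraph V) (S : Set V) : Set V :=
  {x | x ∈ S ∧ ∃ u, u ∈ G.verts ∧ u ∉ S ∧ s(x, u) ∈ G.edges}

/-- `|δ_G({x}, V(G)∖S)|`: the number of edges from `x` to the outside of `S`. -/
def bWeight (G : MGraph V) (S : Set V) (x : V) : ℕ :=
  (G.edges.filter (fun e => ∃ u, u ∈ G.verts ∧ u ∉ S ∧ e = s(x, u))).card

/-- Dissolving step used in the definition of the 3-center of `(G, X)`: a vertex `x ∉ X`
of degree 2 with exactly two (distinct) neighbours `y, z` is removed and the edge `yz`
is added (increasing its multiplicity if it is already present). -/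
def DissolveStep (X : Set V) (G G' : MGraph V) : Prop :=
  ∃ x y z, x ∉ X ∧ x ∈ G.verts ∧ y ≠ z ∧ x ≠ y ∧ x ≠ z ∧
    G.edges.filter (fun e => x ∈ e) = {s(x, y), s(x, z)} ∧
    G' = ⟨G.verts \ {x}, G.edges.filter (fun e => x ∉ e) + {s(y, z)}⟩

/-- Deletion step used in the definition of the 3-center of `(G, X)`: a vertex `x ∉ X`
of degree at most 2 with at most one neighbour is removed. -/
def DeleteStep (X : Set V) (G G' : MGraph V) : Prop :=
  ∃ x, x ∉ X ∧ x ∈ G.verts ∧ G.degree x ≤ 2 ∧ (G.nbrSet x).Subsingleton ∧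
    G' = ⟨G.verts \ {x}, G.edges.filter (fun e => x ∉ e)⟩

def CenterStep (X : Set V) (G G' : MGraph V) : Prop :=
  DissolveStep X G G' ∨ DeleteStep X G G'

/-- `H` is a 3-center of `(G, X)` if it is obtained from `G` by repeatedly applying
dissolve/delete steps until none applies. -/
def IsThreeCenter (X : Set V) (G H : MGraph V) : Prop :=
  Relation.ReflTransGen (CenterStep X) G H ∧ ∀ H', ¬ CenterStep X H H'

/-- `(T, X)` is a tree-cut decomposition of `G`: `T` is a tree and the bags `X t` are
pairwise disjoint with union `V(G)`. -/
def IsTCD {ι : Type} (G : MGraph V) (T : SimpleGraph ι) (X : ι → Set V) : Prop :=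
  T.IsTree ∧ (Pairwise fun t t' => Disjoint (X t) (X t')) ∧ (⋃ t, X t) = G.verts

/-- Given a tree edge `{a,b}` of `T`, the union of the bags over the component of
`T - {a,b}` containing `a`. -/
def edgeSide {ι : Type} (T : SimpleGraph ι) (X : ι → Set V) (a b : ι) : Set V :=
  ⋃ t ∈ {t | (T.deleteEdges {s(a, b)}).Reachable a t}, X t

/-- The adhesion `δ^T({a,b})` of a tree edge of a tree-cut decomposition. -/
def adhesion (G : MGraph V) {ι : Type} (T : SimpleGraph ι) (X : ι → Set V) (a b : ι) :
    Multiset (Sym2 V) :=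
  G.cut (edgeSide T X a b) (edgeSide T X b a)

/-- `a` and `b` are connected in `T - t`. -/
def ReachAvoid {ι : Type} (T : SimpleGraph ι) (t a b : ι) : Prop :=
  ∃ (ha : a ∈ ({t}ᶜ : Set ι)) (hb : b ∈ ({t}ᶜ : Set ι)),
    (T.induce ({t}ᶜ : Set ι)).Reachable ⟨a, ha⟩ ⟨b, hb⟩

/-- The neighbour of `t` indexing the component of `T - t` whose bags contain `v`. -/
def compOf {ι : Type} (T : SimpleGraph ι) (X : ι → Set V) (t : ι) (v : V) : ι :=
  if h : ∃ s, T.Adj t s ∧ ∃ t', v ∈ X t' ∧ ReachAvoid T t s t' then h.choose else t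

/-- The identification map used in the definition of the torso at `t`. -/
def torsoMap {ι : Type} (T : SimpleGraph ι) (X : ι → Set V) (t : ι) (v : V) : V ⊕ ι :=
  if v ∈ X t then Sum.inl v else Sum.inr (compOf T X t v)

/-- The torso of `G` at node `t` of the tree-cut decomposition `(T, X)`: each non-empty
union of bags over a component of `T - t` is identified to a single vertex (components
are indexed by the corresponding neighbour of `t`); parallel edges are kept, loops
are discarded. -/
def torso {ι : Type} (G : MGraph V) (T : SimpleGraph ι) (X : ι → Set V) (t : ι) :
    MGraph (V ⊕ ι) :=
  ⟨Sum.inl '' (X t) ∪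
     Sum.inr '' {s | T.Adj t s ∧ ∃ t' v, v ∈ X t' ∧ ReachAvoid T t s t'},
   (G.edges.map (Sym2.map (torsoMap T X t))).filter (fun e => ¬ e.IsDiag)⟩

/-- The width of the tree-cut decomposition `(T, X)` of `G` is at most `w`: all
adhesions have at most `w` edges and all 3-centers of torsos have at most `w` vertices. -/
def WidthLE {ι : Type} (G : MGraph V) (T : SimpleGraph ι) (X : ι → Set V) (w : ℕ) : Prop :=
  (∀ a b, T.Adj a b → Multiset.card (adhesion G T X a b) ≤ w) ∧
  ∀ t H, IsThreeCenter (Sum.inl '' (X t)) (torso G T X t) H → H.verts.ncard ≤ w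

/-- `G` has a tree-cut decomposition of width at most `w`. -/
def tcwLE (G : MGraph V) (w : ℕ) : Prop :=
  ∃ (ι : Type) (_ : Finite ι) (T : SimpleGraph ι) (X : ι → Set V),
    IsTCD G T X ∧ WidthLE G T X w

/-- The tree-cut width of a multigraph. -/
def tcw (G : MGraph V) : ℕ := sInf {w | tcwLE G w}

/-- A leaf of a tree: a node with exactly one neighbour. -/
def IsLeaf {ι : Type} (T : SimpleGraph ι) (t : ι) : Prop := ∃! s, T.Adj t s

/-- The internal width of `(T, X)` is at most `w`: all adhesions are at most `w` and the
3-center torso sizes of all *non-leaf* nodes are at most `w`. -/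
def InWidthLE {ι : Type} (G : MGraph V) (T : SimpleGraph ι) (X : ι → Set V) (w : ℕ) : Prop :=
  (∀ a b, T.Adj a b → Multiset.card (adhesion G T X a b) ≤ w) ∧
  ∀ t, ¬ IsLeaf T t →
    ∀ H, IsThreeCenter (Sum.inl '' (X t)) (torso G T X t) H → H.verts.ncard ≤ w

/-- A tree-cut decomposition is non-trivial if at least two bags are non-empty. -/
def NonTrivial {ι : Type} (X : ι → Set V) : Prop :=
  ∃ t t', t ≠ t' ∧ (X t).Nonempty ∧ (X t').Nonempty

/-- Identifying the vertex set `S` of `G` into the single vertex `v₀ ∈ S`: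
edges inside `S` are deleted (loops discarded), parallel edges are kept. -/
def collapse (G : MGraph V) (S : Set V) (v₀ : V) : MGraph V :=
  ⟨(G.verts \ S) ∪ {v₀},
   (G.edges.map (Sym2.map (fun x => if x ∈ S then v₀ else x))).filter (fun e => ¬ e.IsDiag)⟩

/-- One step of taking an immersion: deleting an edge, deleting a vertex, or lifting a
pair of edges `{x,v}, {v,y}` to the single edge `{x,y}`. -/
def ImmStep (G G' : MGraph V) : Prop :=
  (∃ e ∈ G.edges, G' = ⟨G.verts, G.edges.erase e⟩) ∨
  (∃ v ∈ G.verts, G' = ⟨G.verts \ {v}, G.edges.filter (fun e => v ∉ e)⟩) ∨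
  (∃ x v y, x ≠ v ∧ y ≠ v ∧ x ≠ y ∧ s(x, v) ∈ G.edges ∧ s(v, y) ∈ G.edges.erase s(x, v) ∧
    G' = ⟨G.verts, s(x, y) ::ₘ ((G.edges.erase s(x, v)).erase s(v, y))⟩)

/-- `H` is an immersion of `G`. -/
def IsImmersion (H G : MGraph V) : Prop := Relation.ReflTransGen ImmStep G H

end MGraph

/-- The multigraph associated to a simple graph. -/
def SimpleGraph.toMGraph {α : Type} [Fintype α] (G : SimpleGraph α) : MGraph α :=
  ⟨Set.univ, (Set.toFinite G.edgeSet).toFinset.val⟩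

/-- The star with `ℓ` leaves: center `none`, leaves `some i`. -/
def starGraph (ℓ : ℕ) : SimpleGraph (Option (Fin ℓ)) :=
  SimpleGraph.fromRel (fun a _ => a = none)

/-- The graph `H_w`: `w` disjoint cliques `Q_i = {(i,j) : j}` of size `w`, together with
the cross edges `{(i,j),(j,i)}` for `i ≠ j`. -/
def Hw (w : ℕ) : SimpleGraph (Fin w × Fin w) :=
  SimpleGraph.fromRel (fun p q => p.1 = q.1 ∨ (q.1 = p.2 ∧ q.2 = p.1))

/-- Two vertex sets touch in `G`: they intersect or are joined by an edge. -/
def Touch {α : Type} (G : SimpleGraph α) (A B : Set α) : Prop :=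
  (A ∩ B).Nonempty ∨ ∃ a ∈ A, ∃ b ∈ B, G.Adj a b

/-- A bramble: a collection of (vertex sets of) connected subgraphs pairwise touching. -/
def IsBramble {α : Type} (G : SimpleGraph α) (ℬ : Set (Set α)) : Prop :=
  (∀ A ∈ ℬ, (G.induce A).Connected) ∧ ∀ A ∈ ℬ, ∀ B ∈ ℬ, Touch G A B

/-- `B(i,Z) = {(i,j) : j ∈ Z} ∪ {(j,i) : j ∈ Z}`. -/
def Bset (w : ℕ) (i : Fin w) (Z : Finset (Fin w)) : Set (Fin w × Fin w) :=
  {p | (p.1 = i ∧ p.2 ∈ Z) ∨ (p.2 = i ∧ p.1 ∈ Z)}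

/-- The bramble `B_w = {H_w[B(i,Z)] : i ∈ [w], Z ⊆ [w]∖{i}, |Z| = w/2}`. -/
def Bfam (w : ℕ) : Set (Set (Fin w × Fin w)) :=
  {A | ∃ (i : Fin w) (Z : Finset (Fin w)), i ∉ Z ∧ Z.card = w / 2 ∧ A = Bset w i Z}

/-- `(T, Y)` is a tree decomposition of the simple graph `G`. -/
def IsTreeDecomp {α ι : Type} (G : SimpleGraph α) (T : SimpleGraph ι) (Y : ι → Set α) : Prop :=
  T.IsTree ∧ (∀ v, ∃ x, v ∈ Y x) ∧
  (∀ u v, G.Adj u v → ∃ x, u ∈ Y x ∧ v ∈ Y x) ∧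
  (∀ v, (T.induce {x | v ∈ Y x}).Connected)

/-- `G` has treewidth at most `k`. -/
def twLE {α : Type} (G : SimpleGraph α) (k : ℕ) : Prop :=
  ∃ (ι : Type) (_ : Finite ι) (T : SimpleGraph ι) (Y : ι → Set α),
    IsTreeDecomp G T Y ∧ ∀ x, (Y x).ncard ≤ k + 1

end
noncomputable section
open scoped Classical

namespace MGraph

variable {V : Type}

/-- The weight function `γ'` of Lemma 4: `γ'(v) = |δ_G({v}, V(G)∖S)|` for `v ∈ S`,
and `0` otherwise. -/
def gammaExt (G : MGraph V) (S : Set V) (v : V) : ℕ :=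
  if v ∈ S then G.bWeight S v else 0

/-- `γ'(T_b)` where `T_b` is the component of `T - {a,b}` containing `b`. -/
def sideWeight (G : MGraph V) {ι : Type} (T : SimpleGraph ι) (X : ι → Set V)
    (S : Set V) (a b : ι) : ℕ :=
  ∑ᶠ t ∈ {t | (T.deleteEdges {s(a, b)}).Reachable b t}, ∑ᶠ v ∈ X t, G.gammaExt S v

/-- The edge `{x,y}` of `T` is oriented from `x` to `y` by Rule 1 (`γ'(T_y) > w`) or by
Rule 2 (`S` avoids all the bags on the `x`-side). -/
def ruleOrient (G : MGraph V) {ι : Type} (T : SimpleGraph ι) (X : ι → Set V)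
    (S : Set V) (w : ℕ) (x y : ι) : Prop :=
  w < G.sideWeight T X S x y ∨ S ∩ edgeSide T X x y = ∅

end MGraph

/-- The tree obtained from `T` by attaching `ℓ` new leaves to the node `t`
(`t` plays the role of the center of the star replacing the former leaf `t`). -/
def refineTree {ι : Type} (T : SimpleGraph ι) (t : ι) (ℓ : ℕ) : SimpleGraph (ι ⊕ Fin ℓ) :=
  SimpleGraph.fromRel (fun a b =>
    (∃ i j, a = Sum.inl i ∧ b = Sum.inl j ∧ T.Adj i j) ∨
    (a = Sum.inl t ∧ ∃ i, b = Sum.inr i))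

/-- The bags of the refined decomposition: the bag of the former leaf `t` is replaced by
the central bag `Xs none` of the star decomposition, the new leaves get the leaf bags. -/
def refineBags {V ι : Type} (X : ι → Set V) (t : ι) {ℓ : ℕ}
    (Xs : Option (Fin ℓ) → Set V) : ι ⊕ Fin ℓ → Set V :=
  fun s => Sum.rec (fun a => if a = t then Xs none else X a) (fun i => Xs (some i)) s

/-- `w = n³/2 + k`, the target width in the Min Bisection reduction. -/
def bisectW (n k : ℕ) : ℕ := n ^ 3 / 2 + k

/-- The vertex type of the graph `G'` of the Min Bisection reduction:
`V = Fin n`, `Q = Fin (w-2)`, and a set `C_{x,y}` of `w+1` vertices for each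
(unordered) pair `x < y` of vertices of `Q`. -/
abbrev BisV (n w : ℕ) : Type :=
  Fin n ⊕ (Fin (w - 2) ⊕ (({p : Fin (w - 2) × Fin (w - 2) // p.1 < p.2}) × Fin (w + 1)))

/-- The (one-directional) edge relation of `G'`: `V` induces a copy of `G`; each vertex
`a ∈ V` is adjacent to the `n²` vertices `f a ⊆ Q`; every vertex of `C_{x,y}` is
adjacent to both `x` and `y`. -/
def bisectR {n : ℕ} (G : SimpleGraph (Fin n)) (w : ℕ) (f : Fin n → Finset (Fin (w - 2))) :
    BisV n w → BisV n w → Prop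
  | Sum.inl a, Sum.inl b => G.Adj a b
  | Sum.inl a, Sum.inr (Sum.inl q) => q ∈ f a
  | Sum.inr (Sum.inl q), Sum.inr (Sum.inr c) => q = c.1.1.1 ∨ q = c.1.1.2
  | _, _ => False

/-- The graph `G'` of the Min Bisection reduction. -/
def bisectG {n : ℕ} (G : SimpleGraph (Fin n)) (w : ℕ) (f : Fin n → Finset (Fin (w - 2))) :
    SimpleGraph (BisV n w) :=
  SimpleGraph.fromRel (bisectR G w f)

/-- The multiset of edges used by a walk, given as its list of vertices. -/
def walkEdges {V : Type} (l : List V) : Multiset (Sym2 V) :=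
  ↑((l.zip l.tail).map fun p => s(p.1, p.2))

end

noncomputable section
open scoped Classical
open MGraph

section WalkLemmas

variable {α : Type} {G : SimpleGraph α}

open SimpleGraph

lemma exists_last_edge {x y : α} (p : G.Walk x y) (hxy : x ≠ y) :
    ∃ w, G.Adj w y ∧ s(w, y) ∈ p.edges := by
  induction p with
  | nil => exact absurd rfl hxy
  | @cons x v y h p ih =>
    rcases eq_or_ne v y with rfl | hvy
    · exact ⟨x, h, by simp⟩
    · obtain ⟨w, hw, hmem⟩ := ih hvy
      exact ⟨w, hw, by simp [hmem]⟩

lemma reach_isolated {x y : α} (h : G.Reachable x y) (hiso : ∀ z, ¬ G.Adj x z) : y = x := by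
  obtain ⟨p⟩ := h
  cases p with
  | nil => rfl
  | cons h' p' => exact absurd h' (hiso _)

lemma reachable_induce_of_walk {s : Set α} {a b : α} (p : G.Walk a b)
    (hp : ∀ v ∈ p.support, v ∈ s) (ha : a ∈ s) (hb : b ∈ s) :
    (G.induce s).Reachable ⟨a, ha⟩ ⟨b, hb⟩ := by
  induction p with
  | nil => rfl
  | @cons a v b h p ih =>
    have hv : v ∈ s := hp v (by simp)
    have hadj : (G.induce s).Adj ⟨a, ha⟩ ⟨v, hv⟩ := by simpa using h
    exact hadj.reachable.trans (ih (fun u hu => hp u (by simp [hu])) hv hb)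

lemma reachAvoid_iff {t a b : α} :
    MGraph.ReachAvoid G t a b ↔ a ≠ t ∧ b ≠ t ∧ ∃ p : G.Walk a b, t ∉ p.support := by
  constructor
  · rintro ⟨ha, hb, hr⟩
    have ha' : a ≠ t := by simpa using ha
    have hb' : b ≠ t := by simpa using hb
    obtain ⟨p⟩ := hr
    refine ⟨ha', hb', (p.map (SimpleGraph.Embedding.induce _).toHom), ?_⟩
    intro ht
    replace ht : t ∈ p.support.map (SimpleGraph.Embedding.induce (G := G) ({t}ᶜ : Set α)).toHom := by
      rw [← SimpleGraph.Walk.support_map]; exact ht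
    rw [List.mem_map] at ht
    obtain ⟨⟨u, hu⟩, -, hval⟩ := ht
    exact hu (by simpa using hval)
  · rintro ⟨ha, hb, p, hp⟩
    have ha' : a ∈ ({t}ᶜ : Set α) := by simpa using ha
    have hb' : b ∈ ({t}ᶜ : Set α) := by simpa using hb
    exact ⟨ha', hb',
      reachable_induce_of_walk p (fun v hv => by simp; rintro rfl; exact hp hv) ha' hb'⟩

lemma tree_unique_nbr (hT : G.IsTree) {t s₁ s₂ u : α}
    (h1 : G.Adj t s₁) (h2 : G.Adj t s₂) (p₁ : G.Walk s₁ u) (hp₁ : t ∉ p₁.support)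
    (p₂ : G.Walk s₂ u) (hp₂ : t ∉ p₂.support) : s₁ = s₂ := by
  have hq₁ : t ∉ (p₁.toPath : G.Walk s₁ u).support :=
    fun h => hp₁ (p₁.support_toPath_subset h)
  have hq₂ : t ∉ (p₂.toPath : G.Walk s₂ u).support :=
    fun h => hp₂ (p₂.support_toPath_subset h)
  have hc₁ : (SimpleGraph.Walk.cons h1 (p₁.toPath : G.Walk s₁ u)).IsPath :=
    (p₁.toPath.2.cons hq₁)
  have hc₂ : (SimpleGraph.Walk.cons h2 (p₂.toPath : G.Walk s₂ u)).IsPath :=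
    (p₂.toPath.2.cons hq₂)
  obtain ⟨p, -, huniq⟩ := hT.existsUnique_path t u
  have e := (huniq _ hc₁).trans (huniq _ hc₂).symm
  have := congrArg (fun w : G.Walk t u => w.getVert 1) e
  simpa using this

end WalkLemmas
section SumLemmas

open SimpleGraph

variable {ι : Type} {ℓ : ℕ} {t : ι}

/-- In a graph on `ι ⊕ Fin ℓ` where each `inr i` has `inl t` as only possible neighbour,
paths between `inl` vertices stay in the `inl` part. -/
lemma path_support_inl {B : SimpleGraph (ι ⊕ Fin ℓ)}
    (hB : ∀ (i : Fin ℓ) x, B.Adj (Sum.inr i) x → x = Sum.inl t)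
    {a b : ι} (p : B.Walk (Sum.inl a) (Sum.inl b)) (hp : p.IsPath) :
    ∀ v ∈ p.support, ∃ c, v = Sum.inl c := by
  intro v hv
  rcases v with c | i
  · exact ⟨c, rfl⟩
  exfalso
  have hne1 : (Sum.inl a : ι ⊕ Fin ℓ) ≠ Sum.inr i := by simp
  have hne2 : (Sum.inl b : ι ⊕ Fin ℓ) ≠ Sum.inr i := by simp
  -- split the path at `inr i`
  have hsplit := SimpleGraph.Walk.take_spec p hv
  set q₁ := p.takeUntil _ hv with hq₁
  set q₂ := p.dropUntil _ hv with hq₂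
  have hsupp : p.support = q₁.support ++ q₂.support.tail := by
    rw [← hsplit, SimpleGraph.Walk.support_append]
  have hnodup : (q₁.support ++ q₂.support.tail).Nodup := by
    rw [← hsupp]; exact hp.support_nodup
  -- `inl t ∈ q₁.support`
  obtain ⟨w, hw, hwe⟩ := exists_last_edge q₁ hne1
  have hwt : w = Sum.inl t := hB i w hw.symm
  subst hwt
  have h1 : (Sum.inl t : ι ⊕ Fin ℓ) ∈ q₁.support :=
    q₁.fst_mem_support_of_mem_edges hwe
  -- `inl t ∈ q₂.support.tail`
  have h2 : (Sum.inl t : ι ⊕ Fin ℓ) ∈ q₂.support.tail := by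
    cases q₂ with
    | @cons _ v _ h q =>
      have hvt : v = Sum.inl t := hB i v h
      subst hvt
      simp
  rw [List.nodup_append] at hnodup
  exact hnodup.2.2 _ h1 _ h2 rfl

lemma lift_walk {B : SimpleGraph (ι ⊕ Fin ℓ)} {A : SimpleGraph ι}
    (hBA : ∀ u v, B.Adj (Sum.inl u) (Sum.inl v) → A.Adj u v) :
    ∀ {x y : ι ⊕ Fin ℓ} (p : B.Walk x y), (∀ v ∈ p.support, ∃ c, v = Sum.inl c) →
    ∀ {a b : ι}, x = Sum.inl a → y = Sum.inl b →
    ∃ q : A.Walk a b, p.support = q.support.map Sum.inl ∧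
      p.edges = q.edges.map (Sym2.map Sum.inl) := by
  intro x y p
  induction p with
  | nil =>
    rintro _ a b rfl h
    obtain rfl : a = b := by simpa using h
    exact ⟨SimpleGraph.Walk.nil, by simp, by simp⟩
  | @cons x v y h p ih =>
    rintro hs a b rfl rfl
    obtain ⟨c, rfl⟩ := hs v (by simp)
    have hac : A.Adj a c := hBA _ _ h
    obtain ⟨q, hq1, hq2⟩ := ih (fun u hu => hs u (by simp [hu])) rfl rfl
    exact ⟨SimpleGraph.Walk.cons hac q, by simp [hq1], by simp [hq2]⟩

lemma walk_to_inr {B : SimpleGraph (ι ⊕ Fin ℓ)}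
    (hB : ∀ (i : Fin ℓ) x, B.Adj (Sum.inr i) x → x = Sum.inl t)
    {x : ι ⊕ Fin ℓ} {i : Fin ℓ} (p : B.Walk x (Sum.inr i)) (hx : x ≠ Sum.inr i) :
    (Sum.inl t : ι ⊕ Fin ℓ) ∈ p.support ∧ B.Adj (Sum.inl t) (Sum.inr i) := by
  obtain ⟨w, hw, hwe⟩ := exists_last_edge p hx
  have hwt : w = Sum.inl t := hB i w hw.symm
  subst hwt
  exact ⟨p.fst_mem_support_of_mem_edges hwe, hw⟩

end SumLemmas

section RefineTree

open SimpleGraph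

variable {ι : Type} {T : SimpleGraph ι} {t : ι} {ℓ : ℕ}

lemma refine_adj_inl_inl {a b : ι} :
    (refineTree T t ℓ).Adj (Sum.inl a) (Sum.inl b) ↔ T.Adj a b := by
  constructor
  · rintro ⟨hne, h | h⟩
    · rcases h with ⟨i, j, hi, hj, hadj⟩ | ⟨-, i, hi⟩
      · obtain rfl := Sum.inl.inj hi; obtain rfl := Sum.inl.inj hj; exact hadj
      · exact absurd hi (by simp)
    · rcases h with ⟨i, j, hi, hj, hadj⟩ | ⟨-, i, hi⟩
      · obtain rfl := Sum.inl.inj hi; obtain rfl := Sum.inl.inj hj; exact hadj.symm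
      · exact absurd hi (by simp)
  · intro h
    exact ⟨by simpa using h.ne, Or.inl (Or.inl ⟨a, b, rfl, rfl, h⟩)⟩

lemma refine_adj_inr {i : Fin ℓ} {x : ι ⊕ Fin ℓ} :
    (refineTree T t ℓ).Adj (Sum.inr i) x ↔ x = Sum.inl t := by
  constructor
  · rintro ⟨hne, h | h⟩
    · rcases h with ⟨u, v, hu, -, -⟩ | ⟨hu, -⟩
      · exact absurd hu (by simp)
      · exact absurd hu (by simp)
    · rcases h with ⟨u, v, -, hv, -⟩ | ⟨hx, -⟩
      · exact absurd hv (by simp)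
      · exact hx
  · rintro rfl
    exact ⟨by simp, Or.inr (Or.inr ⟨rfl, i, rfl⟩)⟩

lemma refine_adj_inl_inr {a : ι} {i : Fin ℓ} :
    (refineTree T t ℓ).Adj (Sum.inl a) (Sum.inr i) ↔ a = t := by
  rw [adj_comm, refine_adj_inr]
  simp [eq_comm]

lemma refine_hB : ∀ (i : Fin ℓ) (x : ι ⊕ Fin ℓ),
    (refineTree T t ℓ).Adj (Sum.inr i) x → x = Sum.inl t :=
  fun _ _ h => refine_adj_inr.mp h

lemma refine_adj_inl_cases {s : ι} {x : ι ⊕ Fin ℓ} (hs : s ≠ t)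
    (h : (refineTree T t ℓ).Adj (Sum.inl s) x) : ∃ c, x = Sum.inl c ∧ T.Adj s c := by
  rcases x with c | i
  · exact ⟨c, rfl, refine_adj_inl_inl.mp h⟩
  · exact absurd (refine_adj_inl_inr.mp h) hs

lemma refine_isTree (hT : T.IsTree) : (refineTree T t ℓ).IsTree := by
  constructor
  · -- connected
    have hreach : ∀ x : ι ⊕ Fin ℓ, (refineTree T t ℓ).Reachable x (Sum.inl t) := by
      intro x
      rcases x with a | i
      · obtain ⟨p⟩ := hT.isConnected.preconnected a t
        exact ⟨p.map ⟨Sum.inl, fun h => refine_adj_inl_inl.mpr h⟩⟩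
      · exact (refine_adj_inr.mpr rfl).reachable
    rw [SimpleGraph.connected_iff]
    exact ⟨fun x y => (hreach x).trans (hreach y).symm, ⟨Sum.inl t⟩⟩
  · -- acyclic
    intro v c hc
    -- first: no `inr` in the support
    have hno_inr : ∀ (i : Fin ℓ), (Sum.inr i : ι ⊕ Fin ℓ) ∉ c.support := by
      intro i hi
      have hc' := hc.rotate hi
      set c' := c.rotate _ hi with hc'def
      cases hcc : c' with
      | nil => rw [hcc] at hc'; exact hc'.ne_nil rfl
      | @cons _ b _ h p =>
        have hb : b = Sum.inl t := refine_hB i b h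
        subst hb
        rw [hcc] at hc'
        have hne : (Sum.inl t : ι ⊕ Fin ℓ) ≠ Sum.inr i := by simp
        obtain ⟨w, hw, hwe⟩ := exists_last_edge p hne
        have hwt : w = Sum.inl t := refine_hB i w hw.symm
        subst hwt
        have : s(Sum.inl t, (Sum.inr i : ι ⊕ Fin ℓ)) ∈ p.edges := hwe
        have hnodup := hc'.edges_nodup
        rw [SimpleGraph.Walk.edges_cons] at hnodup
        rw [List.nodup_cons] at hnodup
        exact hnodup.1 (by rwa [Sym2.eq_swap])
    have hsupp : ∀ u ∈ c.support, ∃ a, u = Sum.inl a := by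
      intro u hu
      rcases u with a | i
      · exact ⟨a, rfl⟩
      · exact absurd hu (hno_inr i)
    obtain ⟨a, rfl⟩ := hsupp v c.start_mem_support
    obtain ⟨q, hq1, hq2⟩ := lift_walk (fun u v h => refine_adj_inl_inl.mp h) c hsupp rfl rfl
    refine hT.2 q ?_
    constructor
    constructor
    · -- IsTrail: edges nodup
      have := hc.edges_nodup
      rw [hq2] at this
      exact ⟨this.of_map _⟩
    · -- nonempty
      intro h
      subst h
      simp at hq2
      have := hc.ne_nil
      apply this
      cases c with
      | nil => rfl
      | cons h p => simp at hq2
    · -- support tail nodup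
      have := hc.2
      rw [hq1] at this
      have htail : (q.support.map (Sum.inl : ι → ι ⊕ Fin ℓ)).tail
          = q.support.tail.map Sum.inl := by
        cases q.support with
        | nil => simp
        | cons u l => simp
      rw [htail] at this
      exact this.of_map _
end RefineTree

section StarLemmas

lemma star_adj {ℓ : ℕ} {a b : Option (Fin ℓ)} :
    (_root_.starGraph ℓ).Adj a b ↔ a ≠ b ∧ (a = none ∨ b = none) := by
  simp [_root_.starGraph, SimpleGraph.fromRel_adj]

end StarLemmas
section MultisetLemmas
variable {α β : Type}

lemma card_filter_or_le (m : Multiset β) (p q : β → Prop) [DecidablePred p] [DecidablePred q]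
    [DecidablePred (fun e => p e ∨ q e)] :
    Multiset.card (m.filter (fun e => p e ∨ q e)) ≤
      Multiset.card (m.filter p) + Multiset.card (m.filter q) := by
  induction m using Multiset.induction_on with
  | empty => simp
  | cons a m ih =>
    rw [Multiset.filter_cons, Multiset.filter_cons, Multiset.filter_cons,
      Multiset.card_add, Multiset.card_add, Multiset.card_add]
    split_ifs <;>
      first
        | (exfalso; tauto)
        | (simp only [Multiset.card_singleton, Multiset.card_zero]; omega)

lemma card_filter_exists_le (s : Finset α) (m : Multiset β) (p : α → β → Prop)
    [∀ a, DecidablePred (p a)] [DecidablePred (fun e => ∃ a ∈ s, p a e)] :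
    Multiset.card (m.filter (fun e => ∃ a ∈ s, p a e)) ≤
      ∑ a ∈ s, Multiset.card (m.filter (p a)) := by
  induction m using Multiset.induction_on with
  | empty => simp
  | cons b m ih =>
    rw [Multiset.filter_cons, Multiset.card_add]
    have hsum : ∀ a ∈ s, Multiset.card ((b ::ₘ m).filter (p a))
        = Multiset.card (m.filter (p a)) + (if p a b then 1 else 0) := by
      intro a _
      rw [Multiset.filter_cons, Multiset.card_add, Nat.add_comm]
      congr 1
      split_ifs <;> simp
    rw [Finset.sum_congr rfl hsum, Finset.sum_add_distrib]
    have hle : Multiset.card (if ∃ a ∈ s, p a b then ({b} : Multiset β) else 0)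
        ≤ ∑ a ∈ s, (if p a b then 1 else 0) := by
      split_ifs with h
      · obtain ⟨a, ha, hpa⟩ := h
        calc Multiset.card {b} = 1 := by simp
          _ ≤ _ := Finset.single_le_sum (f := fun a => if p a b then 1 else 0)
              (fun _ _ => Nat.zero_le _) ha |>.trans_eq' (by rw [if_pos hpa])
      · simp
    omega

end MultisetLemmas

namespace MGraph

section Transport

variable {V W : Type}

lemma centerStep_verts_subset {X : Set V} {G G' : MGraph V} (h : CenterStep X G G') :
    G'.verts ⊆ G.verts := by
  rcases h with ⟨x, y, z, _, _, _, _, _, _, rfl⟩ | ⟨x, _, _, _, _, rfl⟩ <;>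
    exact Set.diff_subset

lemma center_verts_subset {X : Set V} {G H : MGraph V}
    (h : Relation.ReflTransGen (CenterStep X) G H) : H.verts ⊆ G.verts := by
  induction h with
  | refl => exact le_rfl
  | tail _ hstep ih => exact (centerStep_verts_subset hstep).trans ih

/-- Relabelling the vertices of a multigraph. -/
def mapG (f : V → W) (G : MGraph V) : MGraph W :=
  ⟨f '' G.verts, G.edges.map (Sym2.map f)⟩

variable {f : V → W}

lemma mem_sym2_map_iff (hf : Function.Injective f) {x : V} {e : Sym2 V} : f x ∈ Sym2.map f e ↔ x ∈ e := by
  rw [Sym2.mem_map]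
  constructor
  · rintro ⟨a, ha, hax⟩
    rwa [← hf hax]
  · exact fun h => ⟨x, h, rfl⟩

lemma filter_mem_map (hf : Function.Injective f) (m : Multiset (Sym2 V)) (x : V) :
    (m.map (Sym2.map f)).filter (fun e => f x ∈ e)
      = (m.filter (fun e => x ∈ e)).map (Sym2.map f) := by
  rw [Multiset.filter_map]
  congr 1
  apply Multiset.filter_congr
  intro e _
  simp only [Function.comp_apply]
  exact ⟨fun h => (mem_sym2_map_iff hf).mp h, fun h => (mem_sym2_map_iff hf).mpr h⟩

lemma filter_not_mem_map (hf : Function.Injective f) (m : Multiset (Sym2 V)) (x : V) :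
    (m.map (Sym2.map f)).filter (fun e => f x ∉ e)
      = (m.filter (fun e => x ∉ e)).map (Sym2.map f) := by
  rw [Multiset.filter_map]
  congr 1
  apply Multiset.filter_congr
  intro e _
  simp only [Function.comp_apply]
  constructor
  · exact fun h h' => h ((mem_sym2_map_iff hf).mpr h')
  · exact fun h h' => h ((mem_sym2_map_iff hf).mp h')

lemma degree_mapG (hf : Function.Injective f) (G : MGraph V) (x : V) : (mapG f G).degree (f x) = G.degree x := by
  unfold degree mapG
  rw [filter_mem_map hf]
  simp

lemma nbrSet_mapG (hf : Function.Injective f) (G : MGraph V) (x : V) :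
    (mapG f G).nbrSet (f x) = f '' G.nbrSet x := by
  ext y
  simp only [nbrSet, mapG, Set.mem_setOf_eq, Set.mem_image]
  constructor
  · rintro ⟨hy, hmem⟩
    rw [Multiset.mem_map] at hmem
    obtain ⟨e, he, hmape⟩ := hmem
    have hx : x ∈ e := by
      rw [← mem_sym2_map_iff hf (e := e), hmape]
      exact Sym2.mem_mk_left _ _
    obtain ⟨v, rfl⟩ := Sym2.mem_iff_exists.mp hx
    rw [Sym2.map_pair_eq] at hmape
    rcases Sym2.eq_iff.mp hmape with ⟨-, hv⟩ | ⟨hfx, -⟩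
    · subst hv
      refine ⟨v, ⟨?_, ?_⟩, rfl⟩
      · intro h; exact hy (by rw [h])
      · exact he
    · exact absurd hfx.symm hy
  · rintro ⟨v, ⟨hvx, hmem⟩, rfl⟩
    refine ⟨fun h => hvx (hf h), ?_⟩
    rw [Multiset.mem_map]
    exact ⟨s(x, v), hmem, by rw [Sym2.map_pair_eq]⟩

lemma centerStep_mapG (hf : Function.Injective f) {X : Set V} {G H : MGraph V} (h : CenterStep X G H) :
    CenterStep (f '' X) (mapG f G) (mapG f H) := by
  rcases h with ⟨x, y, z, hxX, hxV, hyz, hxy, hxz, hfil, rfl⟩ |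
    ⟨x, hxX, hxV, hdeg, hnbr, rfl⟩
  · left
    refine ⟨f x, f y, f z, ?_, ⟨x, hxV, rfl⟩, fun h => hyz (hf h), fun h => hxy (hf h),
      fun h => hxz (hf h), ?_, ?_⟩
    · rintro ⟨u, huX, hux⟩
      exact hxX (hf hux ▸ huX)
    · show (mapG f G).edges.filter _ = _
      unfold mapG
      rw [filter_mem_map hf, hfil]
      simp [Sym2.map_pair_eq]
    · unfold mapG
      simp only [MGraph.mk.injEq]
      constructor
      · rw [← Set.image_singleton, ← Set.image_diff hf]
      · rw [Multiset.map_add, filter_not_mem_map hf]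
        simp [Sym2.map_pair_eq]
  · right
    refine ⟨f x, ?_, ⟨x, hxV, rfl⟩, ?_, ?_, ?_⟩
    · rintro ⟨u, huX, hux⟩
      exact hxX (hf hux ▸ huX)
    · rw [degree_mapG hf]; exact hdeg
    · rw [nbrSet_mapG hf]; exact hnbr.image f
    · unfold mapG
      simp only [MGraph.mk.injEq]
      constructor
      · rw [← Set.image_singleton, ← Set.image_diff hf]
      · rw [filter_not_mem_map hf]

lemma centerStep_mapG_rev (hf : Function.Injective f) {X : Set V} {G : MGraph V} {H' : MGraph W}
    (h : CenterStep (f '' X) (mapG f G) H') :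
    ∃ H, CenterStep X G H ∧ H' = mapG f H := by
  have hFinj : Function.Injective (Sym2.map f) := Sym2.map.injective hf
  rcases h with ⟨x', y', z', hxX, hxV, hyz, hxy, hxz, hfil, rfl⟩ |
    ⟨x', hxX, hxV, hdeg, hnbr, rfl⟩
  · obtain ⟨x, hxV0, rfl⟩ := hxV
    rw [show (mapG f G).edges = G.edges.map (Sym2.map f) from rfl, filter_mem_map hf] at hfil
    -- extract preimages of y' and z'
    have hy'mem : s(f x, y') ∈ (G.edges.filter (fun e => x ∈ e)).map (Sym2.map f) := by
      rw [hfil]; simp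
    have hz'mem : s(f x, z') ∈ (G.edges.filter (fun e => x ∈ e)).map (Sym2.map f) := by
      rw [hfil]; simp
    obtain ⟨e₁, he₁, he₁eq⟩ := Multiset.mem_map.mp hy'mem
    obtain ⟨e₂, he₂, he₂eq⟩ := Multiset.mem_map.mp hz'mem
    have hx₁ : x ∈ e₁ := (Multiset.mem_filter.mp he₁).2
    have hx₂ : x ∈ e₂ := (Multiset.mem_filter.mp he₂).2
    obtain ⟨y, rfl⟩ := Sym2.mem_iff_exists.mp hx₁
    obtain ⟨z, rfl⟩ := Sym2.mem_iff_exists.mp hx₂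
    rw [Sym2.map_pair_eq] at he₁eq he₂eq
    have hy : f y = y' := by
      rcases Sym2.eq_iff.mp he₁eq with ⟨-, h⟩ | ⟨h, -⟩
      · exact h
      · exact absurd h hxy
    have hz : f z = z' := by
      rcases Sym2.eq_iff.mp he₂eq with ⟨-, h⟩ | ⟨h, -⟩
      · exact h
      · exact absurd h hxz
    subst hy; subst hz
    refine ⟨⟨G.verts \ {x}, G.edges.filter (fun e => x ∉ e) + {s(y, z)}⟩,
      Or.inl ⟨x, y, z, ?_, hxV0, fun h => hyz (congrArg f h), fun h => hxy (congrArg f h),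
        fun h => hxz (congrArg f h), ?_, rfl⟩, ?_⟩
    · exact fun h => hxX ⟨x, h, rfl⟩
    · apply Multiset.map_injective hFinj
      rw [hfil]
      simp [Sym2.map_pair_eq]
    · unfold mapG
      simp only [MGraph.mk.injEq]
      refine ⟨?_, ?_⟩
      · rw [← Set.image_singleton, ← Set.image_diff hf]
      · rw [Multiset.map_add, filter_not_mem_map hf]
        simp [Sym2.map_pair_eq]
  · obtain ⟨x, hxV0, rfl⟩ := hxV
    refine ⟨⟨G.verts \ {x}, G.edges.filter (fun e => x ∉ e)⟩,
      Or.inr ⟨x, fun h => hxX ⟨x, h, rfl⟩, hxV0, ?_, ?_, rfl⟩, ?_⟩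
    · rwa [degree_mapG hf] at hdeg
    · rw [nbrSet_mapG hf] at hnbr
      intro a ha b hb
      exact hf (hnbr (Set.mem_image_of_mem f ha) (Set.mem_image_of_mem f hb))
    · unfold mapG
      simp only [MGraph.mk.injEq]
      refine ⟨?_, ?_⟩
      · rw [← Set.image_singleton, ← Set.image_diff hf]
      · rw [filter_not_mem_map hf]

lemma isThreeCenter_mapG_rev (hf : Function.Injective f) {X : Set V} {G : MGraph V} {H' : MGraph W}
    (h : IsThreeCenter (f '' X) (mapG f G) H') :
    ∃ H, IsThreeCenter X G H ∧ H'.verts.ncard = H.verts.ncard := by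
  obtain ⟨hrtg, hterm⟩ := h
  have key : ∀ K' : MGraph W, Relation.ReflTransGen (CenterStep (f '' X)) (mapG f G) K' →
      ∃ K, K' = mapG f K ∧ Relation.ReflTransGen (CenterStep X) G K := by
    intro K' hK'
    induction hK' with
    | refl => exact ⟨G, rfl, Relation.ReflTransGen.refl⟩
    | tail hab hstep ih =>
      obtain ⟨K, rfl, hGK⟩ := ih
      obtain ⟨L, hKL, rfl⟩ := centerStep_mapG_rev hf hstep
      exact ⟨L, rfl, hGK.tail hKL⟩
  obtain ⟨H, rfl, hGH⟩ := key H' hrtg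
  refine ⟨H, ⟨hGH, ?_⟩, ?_⟩
  · intro L hL
    exact hterm (mapG f L) (centerStep_mapG hf hL)
  · exact Set.ncard_image_of_injective _ hf

end Transport

end MGraph
section CardFilterImp

variable {β : Type}

lemma card_filter_le_of_imp (m : Multiset β) (p q : β → Prop) [DecidablePred p]
    [DecidablePred q] (h : ∀ e ∈ m, p e → q e) :
    Multiset.card (m.filter p) ≤ Multiset.card (m.filter q) := by
  induction m using Multiset.induction_on with
  | empty => simp
  | cons b m ih =>
    have hb := h b (Multiset.mem_cons_self b m)
    have ih' := ih (fun e he hpe => h e (Multiset.mem_cons_of_mem he) hpe)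
    rw [Multiset.filter_cons, Multiset.filter_cons, Multiset.card_add, Multiset.card_add]
    split_ifs <;>
      first
        | (exfalso; tauto)
        | (simp only [Multiset.card_singleton, Multiset.card_zero]; omega)

end CardFilterImp

section EdgeSides

open SimpleGraph MGraph

variable {V ι : Type} {G : MGraph V} {T : SimpleGraph ι} {X : ι → Set V} {t : ι} {ℓ : ℕ}
  {Xs : Option (Fin ℓ) → Set V}

lemma cut_comm (G : MGraph V) (A B : Set V) : G.cut A B = G.cut B A := by
  unfold MGraph.cut
  apply Multiset.filter_congr
  intro e _
  constructor
  · rintro ⟨a, ha, b, hb, rfl⟩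
    exact ⟨b, hb, a, ha, Sym2.eq_swap⟩
  · rintro ⟨a, ha, b, hb, rfl⟩
    exact ⟨b, hb, a, ha, Sym2.eq_swap⟩

lemma cut_eq_of_eq {A B A' B' : Set V} (hA : A = A') (hB : B = B') :
    G.cut A B = G.cut A' B' := by rw [hA, hB]

/-- Reachability transfer for `refineTree` minus an `inl`-`inl` edge. -/
lemma reach_refine_del_iff {a b c : ι} :
    ((refineTree T t ℓ).deleteEdges {s(Sum.inl a, Sum.inl b)}).Reachable
      (Sum.inl a) (Sum.inl c)
    ↔ (T.deleteEdges {s(a, b)}).Reachable a c := by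
  have hB : ∀ (i : Fin ℓ) x, ((refineTree T t ℓ).deleteEdges
      {s(Sum.inl a, Sum.inl b)}).Adj (Sum.inr i) x → x = Sum.inl t := by
    intro i x h
    rw [SimpleGraph.deleteEdges_adj] at h
    exact refine_adj_inr.mp h.1
  constructor
  · intro h
    obtain ⟨p⟩ := h
    set pp := p.toPath.1 with hpp
    have hsupp := path_support_inl hB pp p.toPath.2
    obtain ⟨q, -, -⟩ := lift_walk (B := (refineTree T t ℓ).deleteEdges {s(Sum.inl a, Sum.inl b)})
      (A := T.deleteEdges {s(a, b)})
      (fun u v h => by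
        rw [SimpleGraph.deleteEdges_adj] at h ⊢
        refine ⟨refine_adj_inl_inl.mp h.1, ?_⟩
        intro hmem
        apply h.2
        simp only [Set.mem_singleton_iff] at hmem ⊢
        rw [show s(Sum.inl u, Sum.inl v) = Sym2.map Sum.inl s(u, v) from rfl,
          show s((Sum.inl a : ι ⊕ Fin ℓ), Sum.inl b) = Sym2.map Sum.inl s(a, b) from rfl]
        exact congrArg _ hmem)
      pp hsupp rfl rfl
    exact ⟨q⟩
  · intro h
    obtain ⟨p⟩ := h
    refine ⟨p.map ⟨Sum.inl, ?_⟩⟩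
    intro u v h
    rw [SimpleGraph.deleteEdges_adj] at h ⊢
    refine ⟨refine_adj_inl_inl.mpr h.1, ?_⟩
    intro hmem
    apply h.2
    simp only [Set.mem_singleton_iff] at hmem ⊢
    have := Sym2.map.injective (Sum.inl_injective (β := Fin ℓ)) (a₁ := s(u, v)) (a₂ := s(a, b))
    exact this hmem

lemma reach_refine_del_inr_iff {a b : ι} {i : Fin ℓ} :
    ((refineTree T t ℓ).deleteEdges {s(Sum.inl a, Sum.inl b)}).Reachable
      (Sum.inl a) (Sum.inr i)
    ↔ (T.deleteEdges {s(a, b)}).Reachable a t := by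
  have hB : ∀ (j : Fin ℓ) x, ((refineTree T t ℓ).deleteEdges
      {s(Sum.inl a, Sum.inl b)}).Adj (Sum.inr j) x → x = Sum.inl t := by
    intro j x h
    rw [SimpleGraph.deleteEdges_adj] at h
    exact refine_adj_inr.mp h.1
  have hadj : ((refineTree T t ℓ).deleteEdges {s(Sum.inl a, Sum.inl b)}).Adj
      (Sum.inl t) (Sum.inr i) := by
    rw [SimpleGraph.deleteEdges_adj]
    refine ⟨refine_adj_inl_inr.mpr rfl, ?_⟩
    simp only [Set.mem_singleton_iff]
    intro hmem
    rcases Sym2.eq_iff.mp hmem with ⟨-, h2⟩ | ⟨h1, -⟩ <;> simp_all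
  constructor
  · intro h
    obtain ⟨p⟩ := h
    have hne : (Sum.inl a : ι ⊕ Fin ℓ) ≠ Sum.inr i := by simp
    obtain ⟨hmem, -⟩ := walk_to_inr hB p hne
    have : ((refineTree T t ℓ).deleteEdges {s(Sum.inl a, Sum.inl b)}).Reachable
        (Sum.inl a) (Sum.inl t) := ⟨p.takeUntil _ hmem⟩
    exact reach_refine_del_iff.mp this
  · intro h
    exact (reach_refine_del_iff.mpr h).trans hadj.reachable

/-- The `inr i`-side of the edge `(inl t, inr i)` is isolated. -/
lemma reach_refine_del2_inr {i : Fin ℓ} {x : ι ⊕ Fin ℓ}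
    (h : ((refineTree T t ℓ).deleteEdges {s(Sum.inl t, Sum.inr i)}).Reachable
      (Sum.inr i) x) : x = Sum.inr i := by
  refine reach_isolated h ?_
  intro z hz
  rw [SimpleGraph.deleteEdges_adj] at hz
  have := refine_adj_inr.mp hz.1
  subst this
  exact hz.2 (by rw [Sym2.eq_swap]; exact rfl)

lemma reach_refine_del2_t (hconn : T.Connected) {i : Fin ℓ} {x : ι ⊕ Fin ℓ}
    (hx : x ≠ Sum.inr i) :
    ((refineTree T t ℓ).deleteEdges {s(Sum.inl t, Sum.inr i)}).Reachable (Sum.inl t) x := by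
  have hlift : ∀ c : ι, ((refineTree T t ℓ).deleteEdges
      {s(Sum.inl t, Sum.inr i)}).Reachable (Sum.inl t) (Sum.inl c) := by
    intro c
    obtain ⟨p⟩ := hconn.preconnected t c
    refine ⟨p.map ⟨Sum.inl, ?_⟩⟩
    intro u v h
    rw [SimpleGraph.deleteEdges_adj]
    refine ⟨refine_adj_inl_inl.mpr h, ?_⟩
    simp only [Set.mem_singleton_iff]
    intro hmem
    rcases Sym2.eq_iff.mp hmem with ⟨-, h2⟩ | ⟨-, h2⟩ <;> simp_all
  rcases x with c | j
  · exact hlift c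
  · have hji : j ≠ i := fun h => hx (by rw [h])
    refine (hlift t).trans ?_
    refine SimpleGraph.Adj.reachable ?_
    rw [SimpleGraph.deleteEdges_adj]
    refine ⟨refine_adj_inl_inr.mpr rfl, ?_⟩
    simp only [Set.mem_singleton_iff]
    intro hmem
    rcases Sym2.eq_iff.mp hmem with ⟨-, h2⟩ | ⟨h1, -⟩ <;> simp_all

lemma not_reach_refine_del2 {i : Fin ℓ} :
    ¬ ((refineTree T t ℓ).deleteEdges {s(Sum.inl t, Sum.inr i)}).Reachable
      (Sum.inl t) (Sum.inr i) := by
  intro h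
  exact (by simp : (Sum.inl t : ι ⊕ Fin ℓ) ≠ Sum.inr i) (reach_refine_del2_inr h.symm)

end EdgeSides

section StarSides

open SimpleGraph MGraph

variable {ℓ : ℕ}

lemma star_del_isolated {i : Fin ℓ} {x : Option (Fin ℓ)}
    (h : ((_root_.starGraph ℓ).deleteEdges {s(none, some i)}).Reachable (some i) x) :
    x = some i := by
  refine reach_isolated h ?_
  intro z hz
  rw [SimpleGraph.deleteEdges_adj] at hz
  obtain ⟨hne, hn⟩ := star_adj.mp hz.1
  rcases hn with h1 | h1
  · exact absurd h1 (by simp)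
  · subst h1
    exact hz.2 (by rw [Sym2.eq_swap]; exact rfl)

lemma star_del_none_reach {i : Fin ℓ} {x : Option (Fin ℓ)} (hx : x ≠ some i) :
    ((_root_.starGraph ℓ).deleteEdges {s((none : Option (Fin ℓ)), some i)}).Reachable none x := by
  rcases x with _ | j
  · rfl
  · refine SimpleGraph.Adj.reachable ?_
    rw [SimpleGraph.deleteEdges_adj]
    refine ⟨star_adj.mpr ⟨by simp, Or.inl rfl⟩, ?_⟩
    simp only [Set.mem_singleton_iff]
    intro hmem
    rcases Sym2.eq_iff.mp hmem with ⟨-, h2⟩ | ⟨h1, -⟩ <;> simp_all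

lemma star_del_not_reach {i : Fin ℓ} :
    ¬ ((_root_.starGraph ℓ).deleteEdges {s((none : Option (Fin ℓ)), some i)}).Reachable
      none (some i) := by
  intro h
  exact (by simp : (none : Option (Fin ℓ)) ≠ some i) (star_del_isolated h.symm)

end StarSides
section Refinement

open SimpleGraph MGraph

variable {V ι : Type} {G : MGraph V} {T : SimpleGraph ι} {X : ι → Set V} {t : ι} {ℓ : ℕ}
  {Xs : Option (Fin ℓ) → Set V}

lemma tcd_Xt_sub (htcd : IsTCD G T X) : ∀ s, X s ⊆ G.verts := by
  intro s v hv
  rw [← htcd.2.2]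
  exact Set.mem_iUnion.mpr ⟨s, hv⟩

lemma star_union (hstar : IsTCD (G.induce (X t)) (_root_.starGraph ℓ) Xs)
    (hsub : X t ⊆ G.verts) : (⋃ j, Xs j) = X t := by
  rw [hstar.2.2]
  show G.verts ∩ X t = X t
  exact Set.inter_eq_self_of_subset_right hsub

lemma Xs_sub (hstar : IsTCD (G.induce (X t)) (_root_.starGraph ℓ) Xs)
    (hsub : X t ⊆ G.verts) (j : Option (Fin ℓ)) : Xs j ⊆ X t := by
  rw [← star_union hstar hsub]
  exact Set.subset_iUnion _ j

lemma refineBags_inl_t : refineBags X t Xs (Sum.inl t) = Xs none := by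
  simp [refineBags]

lemma refineBags_inl {a : ι} (h : a ≠ t) : refineBags X t Xs (Sum.inl a) = X a := by
  simp [refineBags, h]

lemma refineBags_inr (i : Fin ℓ) : refineBags X t Xs (Sum.inr i) = Xs (some i) := rfl

lemma tcd_refine (htcd : IsTCD G T X) (hstar : IsTCD (G.induce (X t)) (_root_.starGraph ℓ) Xs) :
    IsTCD G (refineTree T t ℓ) (refineBags X t Xs) := by
  have hsub := tcd_Xt_sub htcd t
  have hXs := Xs_sub hstar hsub
  have hXsU := star_union hstar hsub
  refine ⟨refine_isTree htcd.1, ?_, ?_⟩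
  · -- pairwise disjoint
    have hdisj : ∀ a, a ≠ t → Disjoint (X a) (X t) := fun a ha => htcd.2.1 ha
    intro s₁ s₂ hne
    rcases s₁ with a | i <;> rcases s₂ with b | j
    · have hab : a ≠ b := fun h => hne (by rw [h])
      by_cases hat : a = t <;> by_cases hbt : b = t
      · exact absurd (hat.trans hbt.symm) hab
      · rw [hat, refineBags_inl_t, refineBags_inl hbt]
        exact ((hdisj b hbt).mono_right (hXs none)).symm
      · rw [hbt, refineBags_inl_t, refineBags_inl hat]
        exact (hdisj a hat).mono_right (hXs none)
      · rw [refineBags_inl hat, refineBags_inl hbt]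
        exact htcd.2.1 hab
    · rw [refineBags_inr]
      by_cases hat : a = t
      · rw [hat, refineBags_inl_t]
        exact hstar.2.1 (by simp)
      · rw [refineBags_inl hat]
        exact (hdisj a hat).mono_right (hXs (some j))
    · rw [refineBags_inr]
      by_cases hbt : b = t
      · rw [hbt, refineBags_inl_t]
        exact (hstar.2.1 (by simp : (some i : Option (Fin ℓ)) ≠ none))
      · rw [refineBags_inl hbt]
        exact ((hdisj b hbt).mono_right (hXs (some i))).symm
    · have hij : i ≠ j := fun h => hne (by rw [h])
      rw [refineBags_inr, refineBags_inr]
      exact hstar.2.1 (by simpa using hij)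
  · -- union
    ext v
    simp only [Set.mem_iUnion]
    constructor
    · rintro ⟨s, hs⟩
      rcases s with a | i
      · by_cases hat : a = t
        · rw [hat, refineBags_inl_t] at hs
          exact hsub (hXs none hs)
        · rw [refineBags_inl hat] at hs
          exact tcd_Xt_sub htcd a hs
      · exact hsub (hXs (some i) hs)
    · intro hv
      rw [← htcd.2.2] at hv
      obtain ⟨a, ha⟩ := Set.mem_iUnion.mp hv
      by_cases hat : a = t
      · have : v ∈ ⋃ j, Xs j := hXsU.symm ▸ (hat ▸ ha)
        obtain ⟨j, hj⟩ := Set.mem_iUnion.mp this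
        rcases j with _ | i
        · exact ⟨Sum.inl t, by rw [refineBags_inl_t]; exact hj⟩
        · exact ⟨Sum.inr i, hj⟩
      · exact ⟨Sum.inl a, by rw [refineBags_inl hat]; exact ha⟩

lemma edgeSide_refine_inl (htcd : IsTCD G T X)
    (hstar : IsTCD (G.induce (X t)) (_root_.starGraph ℓ) Xs) (a b : ι) :
    edgeSide (refineTree T t ℓ) (refineBags X t Xs) (Sum.inl a) (Sum.inl b)
      = edgeSide T X a b := by
  have hsub := tcd_Xt_sub htcd t
  have hXs := Xs_sub hstar hsub
  have hXsU := star_union hstar hsub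
  unfold edgeSide
  ext v
  simp only [Set.mem_iUnion, Set.mem_setOf_eq, exists_prop]
  constructor
  · rintro ⟨s, hreach, hv⟩
    rcases s with c | i
    · by_cases hct : c = t
      · rw [hct, refineBags_inl_t] at hv
        exact ⟨t, reach_refine_del_iff.mp (hct ▸ hreach), hXs none hv⟩
      · rw [refineBags_inl hct] at hv
        exact ⟨c, reach_refine_del_iff.mp hreach, hv⟩
    · exact ⟨t, reach_refine_del_inr_iff.mp hreach, hXs (some i) hv⟩
  · rintro ⟨c, hreach, hv⟩
    by_cases hct : c = t
    · have : v ∈ ⋃ j, Xs j := hXsU.symm ▸ (hct ▸ hv)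
      obtain ⟨j, hj⟩ := Set.mem_iUnion.mp this
      rcases j with _ | i
      · exact ⟨Sum.inl t, reach_refine_del_iff.mpr (hct ▸ hreach), by rw [refineBags_inl_t]; exact hj⟩
      · exact ⟨Sum.inr i, reach_refine_del_inr_iff.mpr (hct ▸ hreach), hj⟩
    · exact ⟨Sum.inl c, reach_refine_del_iff.mpr hreach, by rw [refineBags_inl hct]; exact hv⟩

lemma edgeSide_refine_inr_side (i : Fin ℓ) :
    edgeSide (refineTree T t ℓ) (refineBags X t Xs) (Sum.inr i) (Sum.inl t)
      = Xs (some i) := by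
  have hswap : ({s((Sum.inr i : ι ⊕ Fin ℓ), Sum.inl t)} : Set (Sym2 (ι ⊕ Fin ℓ)))
      = {s(Sum.inl t, Sum.inr i)} := by rw [Sym2.eq_swap]
  unfold edgeSide
  ext v
  simp only [Set.mem_iUnion, Set.mem_setOf_eq, exists_prop]
  constructor
  · rintro ⟨s, hreach, hv⟩
    rw [hswap] at hreach
    have := reach_refine_del2_inr hreach
    subst this
    exact hv
  · intro hv
    exact ⟨Sum.inr i, by rw [hswap] <;> exact Reachable.refl _, hv⟩

lemma edgeSide_refine_t_side (htcd : IsTCD G T X)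
    (hstar : IsTCD (G.induce (X t)) (_root_.starGraph ℓ) Xs) (i : Fin ℓ) :
    edgeSide (refineTree T t ℓ) (refineBags X t Xs) (Sum.inl t) (Sum.inr i)
      = G.verts \ Xs (some i) := by
  have htcd' := tcd_refine htcd hstar
  unfold edgeSide
  ext v
  simp only [Set.mem_iUnion, Set.mem_setOf_eq, exists_prop]
  constructor
  · rintro ⟨s, hreach, hv⟩
    have hsne : s ≠ Sum.inr i := by
      rintro rfl
      exact not_reach_refine_del2 hreach
    constructor
    · rw [← htcd'.2.2]
      exact Set.mem_iUnion.mpr ⟨s, hv⟩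
    · intro hvi
      have hdisj := htcd'.2.1 hsne
      exact Set.disjoint_left.mp hdisj hv hvi
  · rintro ⟨hv, hvi⟩
    rw [← htcd'.2.2] at hv
    obtain ⟨s, hs⟩ := Set.mem_iUnion.mp hv
    have hsne : s ≠ Sum.inr i := by
      rintro rfl
      exact hvi hs
    exact ⟨s, reach_refine_del2_t htcd.1.isConnected hsne, hs⟩

lemma edgeSide_star_some (i : Fin ℓ) :
    edgeSide (_root_.starGraph ℓ) Xs (some i) none = Xs (some i) := by
  have hswap : ({s((some i : Option (Fin ℓ)), none)} : Set (Sym2 (Option (Fin ℓ))))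
      = {s(none, some i)} := by rw [Sym2.eq_swap]
  unfold edgeSide
  ext v
  simp only [Set.mem_iUnion, Set.mem_setOf_eq, exists_prop]
  constructor
  · rintro ⟨s, hreach, hv⟩
    rw [hswap] at hreach
    have := star_del_isolated hreach
    subst this
    exact hv
  · intro hv
    exact ⟨some i, by rw [hswap] <;> exact Reachable.refl _, hv⟩

lemma edgeSide_star_none (hstar : IsTCD (G.induce (X t)) (_root_.starGraph ℓ) Xs)
    (hsub : X t ⊆ G.verts) (i : Fin ℓ) :
    edgeSide (_root_.starGraph ℓ) Xs none (some i) = X t \ Xs (some i) := by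
  have hXs := Xs_sub hstar hsub
  have hXsU := star_union hstar hsub
  unfold edgeSide
  ext v
  simp only [Set.mem_iUnion, Set.mem_setOf_eq, exists_prop]
  constructor
  · rintro ⟨s, hreach, hv⟩
    have hsne : s ≠ some i := by
      rintro rfl
      exact star_del_not_reach hreach
    refine ⟨hXs s hv, ?_⟩
    intro hvi
    exact Set.disjoint_left.mp (hstar.2.1 hsne) hv hvi
  · rintro ⟨hv, hvi⟩
    have : v ∈ ⋃ j, Xs j := hXsU.symm ▸ hv
    obtain ⟨j, hj⟩ := Set.mem_iUnion.mp this
    have hjne : j ≠ some i := by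
      rintro rfl
      exact hvi hj
    exact ⟨j, star_del_none_reach hjne, hj⟩

lemma adhesion_refine_inl_inl (htcd : IsTCD G T X)
    (hstar : IsTCD (G.induce (X t)) (_root_.starGraph ℓ) Xs) (a b : ι) :
    adhesion G (refineTree T t ℓ) (refineBags X t Xs) (Sum.inl a) (Sum.inl b)
      = adhesion G T X a b := by
  unfold adhesion
  exact cut_eq_of_eq (edgeSide_refine_inl htcd hstar a b) (edgeSide_refine_inl htcd hstar b a)

lemma cut_bound {w : ℕ} (i : Fin ℓ) (hfin : G.verts.Finite) (htcd : IsTCD G T X)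
    (hstar : IsTCD (G.induce (X t)) (_root_.starGraph ℓ) Xs)
    (hsw : Multiset.card (adhesion (G.induce (X t)) (_root_.starGraph ℓ) Xs (some i) none) ≤ w)
    (hgi : (∑ᶠ x ∈ G.boundary (X t) ∩ Xs (some i), G.bWeight (X t) x) ≤ w) :
    Multiset.card (G.cut (Xs (some i)) (G.verts \ Xs (some i))) ≤ 2 * w := by
  have hsub := tcd_Xt_sub htcd t
  have hXs := Xs_sub hstar hsub
  have hstar_adh : adhesion (G.induce (X t)) (_root_.starGraph ℓ) Xs (some i) none
      = (G.induce (X t)).cut (Xs (some i)) (X t \ Xs (some i)) := by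
    unfold adhesion
    exact cut_eq_of_eq (edgeSide_star_some i) (edgeSide_star_none hstar hsub i)
  rw [hstar_adh] at hsw
  have hSfin : (G.boundary (X t) ∩ Xs (some i)).Finite :=
    hfin.subset (fun x hx => hsub (hXs _ hx.2))
  classical
  have step1 : Multiset.card (G.cut (Xs (some i)) (G.verts \ Xs (some i)))
      ≤ Multiset.card (G.edges.filter (fun e =>
          (∃ a ∈ Xs (some i), ∃ b ∈ X t \ Xs (some i), e = s(a, b)) ∨
          (∃ x ∈ hSfin.toFinset, ∃ u, u ∈ G.verts ∧ u ∉ X t ∧ e = s(x, u)))) := by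
    apply card_filter_le_of_imp
    rintro e he ⟨a, ha, b, ⟨hbv, hbA⟩, rfl⟩
    by_cases hbt : b ∈ X t
    · exact Or.inl ⟨a, ha, b, ⟨hbt, hbA⟩, rfl⟩
    · refine Or.inr ⟨a, ?_, b, hbv, hbt, rfl⟩
      rw [Set.Finite.mem_toFinset]
      exact ⟨⟨hXs _ ha, b, hbv, hbt, he⟩, ha⟩
  have step2 := card_filter_or_le G.edges
    (fun e => ∃ a ∈ Xs (some i), ∃ b ∈ X t \ Xs (some i), e = s(a, b))
    (fun e => ∃ x ∈ hSfin.toFinset, ∃ u, u ∈ G.verts ∧ u ∉ X t ∧ e = s(x, u))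
  have step3 : Multiset.card (G.edges.filter
      (fun e => ∃ a ∈ Xs (some i), ∃ b ∈ X t \ Xs (some i), e = s(a, b))) ≤ w := by
    have hcut_eq : (G.induce (X t)).cut (Xs (some i)) (X t \ Xs (some i))
        = G.edges.filter (fun e =>
            (∃ a ∈ Xs (some i), ∃ b ∈ X t \ Xs (some i), e = s(a, b)) ∧
            ∀ v ∈ e, v ∈ X t) := Multiset.filter_filter _ _ _
    refine le_trans ?_ hsw
    refine le_trans ?_ (le_of_eq (congrArg Multiset.card hcut_eq.symm))
    apply card_filter_le_of_imp
    rintro e he ⟨a, ha, b, hb, rfl⟩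
    refine ⟨⟨a, ha, b, hb, rfl⟩, ?_⟩
    intro v hv
    rcases Sym2.mem_iff.mp hv with rfl | rfl
    · exact hXs _ ha
    · exact hb.1
  have step4 : Multiset.card (G.edges.filter
      (fun e => ∃ x ∈ hSfin.toFinset, ∃ u, u ∈ G.verts ∧ u ∉ X t ∧ e = s(x, u))) ≤ w := by
    refine le_trans (card_filter_exists_le hSfin.toFinset G.edges
      (fun x e => ∃ u, u ∈ G.verts ∧ u ∉ X t ∧ e = s(x, u))) ?_
    have hsets : G.boundary (X t) ∩ Xs (some i) = (↑hSfin.toFinset : Set V) :=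
      (Set.Finite.coe_toFinset hSfin).symm
    rw [hsets, finsum_mem_coe_finset] at hgi
    refine le_trans (le_of_eq (Finset.sum_congr rfl (fun x _ => rfl))) hgi
  have := step1.trans (step2.trans (Nat.add_le_add step3 step4))
  omega

end Refinement
section Torso

open SimpleGraph MGraph

variable {V ι : Type} {G : MGraph V} {T : SimpleGraph ι} {X : ι → Set V} {t : ι} {ℓ : ℕ}
  {Xs : Option (Fin ℓ) → Set V}

lemma compOf_spec (htree : T.IsTree)
    (hdisj : Pairwise fun a b => Disjoint (X a) (X b)) {t s₀ b₀ : ι} {v : V}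
    (hadj : T.Adj t s₀) (hb : v ∈ X b₀) (hra : MGraph.ReachAvoid T t s₀ b₀) :
    compOf T X t v = s₀ := by
  have h : ∃ s, T.Adj t s ∧ ∃ t', v ∈ X t' ∧ MGraph.ReachAvoid T t s t' :=
    ⟨s₀, hadj, b₀, hb, hra⟩
  unfold compOf
  rw [dif_pos h]
  obtain ⟨hadj₁, b₁, hb₁, hra₁⟩ := h.choose_spec
  have hbb : b₁ = b₀ := by
    by_contra hne
    exact Set.disjoint_left.mp (hdisj hne) hb₁ hb
  subst hbb
  obtain ⟨-, -, p₁, hp₁⟩ := reachAvoid_iff.mp hra₁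
  obtain ⟨-, -, p₀, hp₀⟩ := reachAvoid_iff.mp hra
  exact tree_unique_nbr htree hadj₁ hadj p₁ hp₁ p₀ hp₀

lemma compOf_default {t : ι} {v : V}
    (h : ¬ ∃ s, T.Adj t s ∧ ∃ t', v ∈ X t' ∧ MGraph.ReachAvoid T t s t') :
    compOf T X t v = t := dif_neg h

/-- The inclusion homomorphism from `T` into `refineTree T t ℓ`. -/
def inlHom (T : SimpleGraph ι) (t : ι) (ℓ : ℕ) : T →g refineTree T t ℓ :=
  ⟨Sum.inl, fun h => refine_adj_inl_inl.mpr h⟩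

lemma RA_refine_of_RA {s c b : ι} (h : MGraph.ReachAvoid T s c b) :
    MGraph.ReachAvoid (refineTree T t ℓ) (Sum.inl s) (Sum.inl c) (Sum.inl b) := by
  obtain ⟨hcs, hbs, p, hp⟩ := reachAvoid_iff.mp h
  refine reachAvoid_iff.mpr ⟨by simp [hcs], by simp [hbs], p.map (inlHom T t ℓ), ?_⟩
  intro hmem
  replace hmem : (Sum.inl s : ι ⊕ Fin ℓ) ∈ p.support.map (inlHom T t ℓ) := by
    rw [← SimpleGraph.Walk.support_map]; exact hmem
  rw [List.mem_map] at hmem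
  obtain ⟨u, hu, hueq⟩ := hmem
  have : u = s := Sum.inl.inj hueq
  exact hp (this ▸ hu)

lemma RA_refine_inr_of_RA {s c : ι} {j : Fin ℓ} (hst : s ≠ t)
    (h : MGraph.ReachAvoid T s c t) :
    MGraph.ReachAvoid (refineTree T t ℓ) (Sum.inl s) (Sum.inl c) (Sum.inr j) := by
  obtain ⟨hcs, -, p, hp⟩ := reachAvoid_iff.mp h
  have hadj : (refineTree T t ℓ).Adj (Sum.inl t) (Sum.inr j) := refine_adj_inl_inr.mpr rfl
  refine reachAvoid_iff.mpr ⟨by simp [hcs], by simp, (p.map (inlHom T t ℓ)).concat hadj, ?_⟩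
  intro hmem0
  have hmem1 : (Sum.inl s : ι ⊕ Fin ℓ) ∈ (p.map (inlHom T t ℓ)).support ++ [Sum.inr j] := by
    exact (SimpleGraph.Walk.support_concat (p.map (inlHom T t ℓ)) hadj).subst
      (motive := fun l => (Sum.inl s : ι ⊕ Fin ℓ) ∈ l) hmem0
  revert hmem1
  rw [List.mem_append]
  rintro (hmem | hmem)
  · rw [SimpleGraph.Walk.support_map, List.mem_map] at hmem
    obtain ⟨u, hu, hueq⟩ := hmem
    exact hp ((Sum.inl.inj hueq) ▸ hu)
  · simp at hmem

lemma RA_of_RA_refine {s c b : ι} (h : MGraph.ReachAvoid (refineTree T t ℓ)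
    (Sum.inl s) (Sum.inl c) (Sum.inl b)) : MGraph.ReachAvoid T s c b := by
  obtain ⟨hcs, hbs, p, hp⟩ := reachAvoid_iff.mp h
  set pp := p.toPath.1 with hpp
  have hsupp := path_support_inl (refine_hB (T := T)) pp p.toPath.2
  obtain ⟨q, hq1, -⟩ := lift_walk (B := refineTree T t ℓ) (A := T)
    (fun u v h => refine_adj_inl_inl.mp h) pp hsupp rfl rfl
  refine reachAvoid_iff.mpr ⟨fun h => hcs (by rw [h]), fun h => hbs (by rw [h]), q, ?_⟩
  intro hmem
  have : (Sum.inl s : ι ⊕ Fin ℓ) ∈ pp.support := by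
    rw [hq1, List.mem_map]
    exact ⟨s, hmem, rfl⟩
  exact hp (p.support_toPath_subset this)

lemma RA_of_RA_refine_inr {s c : ι} {j : Fin ℓ} (hst : s ≠ t)
    (h : MGraph.ReachAvoid (refineTree T t ℓ) (Sum.inl s) (Sum.inl c) (Sum.inr j)) :
    MGraph.ReachAvoid T s c t := by
  obtain ⟨hcs, -, p, hp⟩ := reachAvoid_iff.mp h
  have hne : (Sum.inl c : ι ⊕ Fin ℓ) ≠ Sum.inr j := by simp
  obtain ⟨hmem, -⟩ := walk_to_inr (refine_hB (T := T)) p hne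
  have hsub := SimpleGraph.Walk.support_takeUntil_subset p hmem
  have h' : MGraph.ReachAvoid (refineTree T t ℓ) (Sum.inl s) (Sum.inl c) (Sum.inl t) := by
    refine reachAvoid_iff.mpr ⟨by simpa using hcs, by simp [Ne.symm hst], p.takeUntil _ hmem, ?_⟩
    exact fun hx => hp (hsub hx)
  exact RA_of_RA_refine h'

/-- Correspondence between the existence conditions defining `compOf` for the refined
decomposition at `inl s` and for the original one at `s`. -/
lemma refine_cond_iff (htcd : IsTCD G T X)
    (hstar : IsTCD (G.induce (X t)) (_root_.starGraph ℓ) Xs) {s : ι} (hst : s ≠ t) {c : ι} {v : V} :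
    (∃ b', v ∈ refineBags X t Xs b' ∧
        MGraph.ReachAvoid (refineTree T t ℓ) (Sum.inl s) (Sum.inl c) b')
    ↔ (∃ b, v ∈ X b ∧ MGraph.ReachAvoid T s c b) := by
  have hsub := tcd_Xt_sub htcd t
  have hXs := Xs_sub hstar hsub
  have hXsU := star_union hstar hsub
  constructor
  · rintro ⟨b', hv, hra⟩
    rcases b' with b | j
    · by_cases hbt : b = t
      · rw [hbt, refineBags_inl_t] at hv
        exact ⟨t, hXs none hv, RA_of_RA_refine (hbt ▸ hra)⟩
      · rw [refineBags_inl hbt] at hv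
        exact ⟨b, hv, RA_of_RA_refine hra⟩
    · exact ⟨t, hXs (some j) hv, RA_of_RA_refine_inr hst hra⟩
  · rintro ⟨b, hv, hra⟩
    by_cases hbt : b = t
    · have : v ∈ ⋃ j, Xs j := hXsU.symm ▸ (hbt ▸ hv)
      obtain ⟨j, hj⟩ := Set.mem_iUnion.mp this
      rcases j with _ | i
      · exact ⟨Sum.inl t, by rw [refineBags_inl_t]; exact hj,
          RA_refine_of_RA (hbt ▸ hra)⟩
      · exact ⟨Sum.inr i, hj, RA_refine_inr_of_RA hst (hbt ▸ hra)⟩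
    · exact ⟨Sum.inl b, by rw [refineBags_inl hbt]; exact hv, RA_refine_of_RA hra⟩

lemma compOf_refine (htcd : IsTCD G T X)
    (hstar : IsTCD (G.induce (X t)) (_root_.starGraph ℓ) Xs) {s : ι} (hst : s ≠ t) (v : V) :
    compOf (refineTree T t ℓ) (refineBags X t Xs) (Sum.inl s) v
      = Sum.inl (compOf T X s v) := by
  have htcd' := tcd_refine htcd hstar
  by_cases h : ∃ c, T.Adj s c ∧ ∃ b, v ∈ X b ∧ MGraph.ReachAvoid T s c b
  · obtain ⟨c, hadj, b, hb, hra⟩ := h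
    rw [compOf_spec htcd.1 htcd.2.1 hadj hb hra]
    obtain ⟨b', hv', hra'⟩ := (refine_cond_iff htcd hstar hst).mpr ⟨b, hb, hra⟩
    exact compOf_spec htcd'.1 htcd'.2.1 (refine_adj_inl_inl.mpr hadj) hv' hra'
  · have h' : ¬ ∃ c', (refineTree T t ℓ).Adj (Sum.inl s) c' ∧
        ∃ b', v ∈ refineBags X t Xs b' ∧
          MGraph.ReachAvoid (refineTree T t ℓ) (Sum.inl s) c' b' := by
      rintro ⟨c', hadj', hex⟩
      obtain ⟨c, rfl, hadj⟩ := refine_adj_inl_cases hst hadj'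
      obtain ⟨b, hv, hra⟩ := (refine_cond_iff htcd hstar hst).mp hex
      exact h ⟨c, hadj, b, hv, hra⟩
    rw [compOf_default h', compOf_default h]

lemma torsoMap_refine (htcd : IsTCD G T X)
    (hstar : IsTCD (G.induce (X t)) (_root_.starGraph ℓ) Xs) {s : ι} (hst : s ≠ t) (v : V) :
    torsoMap (refineTree T t ℓ) (refineBags X t Xs) (Sum.inl s) v
      = Sum.map id Sum.inl (torsoMap T X s v) := by
  unfold torsoMap
  rw [refineBags_inl hst]
  by_cases hv : v ∈ X s
  · rw [if_pos hv, if_pos hv]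
    rfl
  · rw [if_neg hv, if_neg hv, compOf_refine htcd hstar hst]
    rfl

lemma torso_refine_eq (htcd : IsTCD G T X)
    (hstar : IsTCD (G.induce (X t)) (_root_.starGraph ℓ) Xs) {s : ι} (hst : s ≠ t) :
    torso G (refineTree T t ℓ) (refineBags X t Xs) (Sum.inl s)
      = MGraph.mapG (Sum.map (id : V → V) (Sum.inl : ι → ι ⊕ Fin ℓ)) (torso G T X s) := by
  have hφ : Function.Injective (Sum.map (id : V → V) (Sum.inl : ι → ι ⊕ Fin ℓ)) :=
    Function.Injective.sumMap (fun _ _ h => h) Sum.inl_injective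
  unfold torso MGraph.mapG
  simp only [MGraph.mk.injEq]
  constructor
  · -- vertex sets
    rw [Set.image_union]
    congr 1
    · rw [refineBags_inl hst, Set.image_image]
      rfl
    · rw [Set.image_image]
      ext x
      simp only [Set.mem_image, Set.mem_setOf_eq]
      constructor
      · rintro ⟨s', ⟨hadj, b', v, hv, hra⟩, rfl⟩
        obtain ⟨c, rfl, hadjT⟩ := refine_adj_inl_cases hst hadj
        obtain ⟨b, hvb, hrab⟩ := (refine_cond_iff htcd hstar hst).mp ⟨b', hv, hra⟩
        exact ⟨c, ⟨hadjT, b, v, hvb, hrab⟩, rfl⟩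
      · rintro ⟨c, ⟨hadj, b, v, hv, hra⟩, rfl⟩
        obtain ⟨b', hv', hra'⟩ := (refine_cond_iff htcd hstar hst).mpr ⟨b, hv, hra⟩
        exact ⟨Sum.inl c, ⟨refine_adj_inl_inl.mpr hadj, b', v, hv', hra'⟩, rfl⟩
  · -- edge multisets
    have htm : torsoMap (refineTree T t ℓ) (refineBags X t Xs) (Sum.inl s)
        = (Sum.map (id : V → V) Sum.inl) ∘ torsoMap T X s :=
      funext (torsoMap_refine htcd hstar hst)
    have hmapmap : ((G.edges.map (Sym2.map (torsoMap T X s))).map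
            (Sym2.map (Sum.map (id : V → V) Sum.inl))).filter
              (fun e : Sym2 (V ⊕ (ι ⊕ Fin ℓ)) => ¬ e.IsDiag)
        = ((G.edges.map (Sym2.map (torsoMap T X s))).filter
          (fun e : Sym2 (V ⊕ ι) => ¬ e.IsDiag)).map
            (Sym2.map (Sum.map (id : V → V) Sum.inl)) := by
      rw [Multiset.filter_map]
      congr 1
      apply Multiset.filter_congr
      intro e _
      simp only [Function.comp_apply]
      rw [Sym2.isDiag_map hφ]
    rw [htm, ← hmapmap, Multiset.map_map]
    congr 1
    apply Multiset.map_congr rfl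
    intro e _
    simp only [Function.comp_apply]
    exact (Sym2.map_map e).symm

end Torso
section LeafLemmas

open SimpleGraph MGraph

variable {ι : Type} {T : SimpleGraph ι} {t : ι} {ℓ : ℕ}

lemma isLeaf_inr (i : Fin ℓ) : IsLeaf (refineTree T t ℓ) (Sum.inr i) :=
  ⟨Sum.inl t, refine_adj_inr.mpr rfl, fun _ hy => refine_adj_inr.mp hy⟩

lemma isLeaf_refine_of_isLeaf {s : ι} (hst : s ≠ t) (h : IsLeaf T s) :
    IsLeaf (refineTree T t ℓ) (Sum.inl s) := by
  obtain ⟨c, hc, huniq⟩ := h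
  refine ⟨Sum.inl c, refine_adj_inl_inl.mpr hc, ?_⟩
  intro y hy
  obtain ⟨c', rfl, hadj⟩ := refine_adj_inl_cases hst hy
  rw [huniq c' hadj]

end LeafLemmas
theorem refine_large_leaf {V ι : Type} [Finite ι] (G : MGraph V)
    (hfin : G.verts.Finite) (h3 : G.ThreeEdgeConnected) (w : ℕ)
    (T : SimpleGraph ι) (X : ι → Set V) (htcd : IsTCD G T X)
    (hin : InWidthLE G T X (2 * w)) (t : ι) (hleaf : IsLeaf T t)
    (hbig : 2 * w ≤ (X t).ncard)
    (ℓ : ℕ) (hℓ : 1 ≤ ℓ) (Xs : Option (Fin ℓ) → Set V)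
    (hstar : IsTCD (G.induce (X t)) (starGraph ℓ) Xs)
    (hnt : NonTrivial Xs)
    (hsw : InWidthLE (G.induce (X t)) (starGraph ℓ) Xs w)
    (hcenter : (Xs none).ncard + ℓ ≤ w)
    (hγ : ∀ i : Fin ℓ, (∑ᶠ x ∈ G.boundary (X t) ∩ Xs (some i), G.bWeight (X t) x) ≤ w) :
    IsTCD G (refineTree T t ℓ) (refineBags X t Xs) ∧
    InWidthLE G (refineTree T t ℓ) (refineBags X t Xs) (2 * w) ∧
    {s : ι | (X s).Nonempty}.ncard < {s : ι ⊕ Fin ℓ | (refineBags X t Xs s).Nonempty}.ncard := by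
  have hsub := tcd_Xt_sub htcd t
  have hXs := Xs_sub hstar hsub
  have hXsU := star_union hstar hsub
  have hw1 : 1 ≤ w := le_trans hℓ (le_trans (Nat.le_add_left ℓ _) hcenter)
  refine ⟨tcd_refine htcd hstar, ⟨?_, ?_⟩, ?_⟩
  · -- adhesion bounds
    intro x y hadj
    rcases x with a | i <;> rcases y with b | j
    · rw [adhesion_refine_inl_inl htcd hstar]
      exact hin.1 a b (refine_adj_inl_inl.mp hadj)
    · have hat : a = t := refine_adj_inl_inr.mp hadj
      subst hat
      have hadh : adhesion G (refineTree T a ℓ) (refineBags X a Xs) (Sum.inl a) (Sum.inr j)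
          = G.cut (G.verts \ Xs (some j)) (Xs (some j)) := by
        unfold adhesion
        exact cut_eq_of_eq (edgeSide_refine_t_side htcd hstar j) (edgeSide_refine_inr_side j)
      rw [hadh, cut_comm]
      exact cut_bound j hfin htcd hstar
        (hsw.1 (some j) none (star_adj.mpr ⟨by simp, Or.inr rfl⟩)) (hγ j)
    · have hbt : b = t := Sum.inl.inj (refine_adj_inr.mp hadj)
      subst hbt
      have hadh : adhesion G (refineTree T b ℓ) (refineBags X b Xs) (Sum.inr i) (Sum.inl b)
          = G.cut (Xs (some i)) (G.verts \ Xs (some i)) := by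
        unfold adhesion
        exact cut_eq_of_eq (edgeSide_refine_inr_side i) (edgeSide_refine_t_side htcd hstar i)
      rw [hadh]
      exact cut_bound i hfin htcd hstar
        (hsw.1 (some i) none (star_adj.mpr ⟨by simp, Or.inr rfl⟩)) (hγ i)
    · exact absurd (refine_adj_inr.mp hadj) (by simp)
  · -- torso bounds
    intro s hnl H hH
    rcases s with a | i
    · by_cases hat : a = t
      · -- the new centre node: direct counting bound
        subst hat
        obtain ⟨t₀, hadj₀, huniq⟩ := hleaf
        have hsubv := MGraph.center_verts_subset hH.1
        set K : Set (V ⊕ (ι ⊕ Fin ℓ)) := Sum.inl '' (Xs none) ∪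
          Sum.inr '' ({Sum.inl t₀} ∪ Set.range Sum.inr) with hK
        have htv : (torso G (refineTree T a ℓ) (refineBags X a Xs) (Sum.inl a)).verts
            ⊆ K := by
          intro x hx
          rcases hx with ⟨v, hv, rfl⟩ | ⟨s', ⟨hadj', -⟩, rfl⟩
          · rw [refineBags_inl_t] at hv
            exact Or.inl ⟨v, hv, rfl⟩
          · rcases s' with c | i
            · have : c = t₀ := huniq c (refine_adj_inl_inl.mp hadj')
              exact Or.inr ⟨Sum.inl c, Or.inl (by rw [this]; rfl), rfl⟩
            · exact Or.inr ⟨Sum.inr i, Or.inr ⟨i, rfl⟩, rfl⟩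
        have hKfin : K.Finite := by
          apply Set.Finite.union
          · exact ((hfin.subset (fun v hv => hsub (hXs none hv)))).image _
          · exact (Set.toFinite _).image _
        have h1 : H.verts.ncard ≤ K.ncard :=
          Set.ncard_le_ncard (fun x hx => htv (hsubv hx)) hKfin
        have h2 : K.ncard ≤ (Xs none).ncard + (1 + ℓ) := by
          refine le_trans (Set.ncard_union_le _ _) ?_
          have e1 : (Sum.inl '' (Xs none) : Set (V ⊕ (ι ⊕ Fin ℓ))).ncard
              = (Xs none).ncard := Set.ncard_image_of_injective _ Sum.inl_injective
          have e2 : (Sum.inr '' ({Sum.inl t₀} ∪ Set.range Sum.inr) :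
              Set (V ⊕ (ι ⊕ Fin ℓ))).ncard ≤ 1 + ℓ := by
            rw [Set.ncard_image_of_injective _ Sum.inr_injective]
            refine le_trans (Set.ncard_union_le _ _) ?_
            have e3 : (Set.range (Sum.inr : Fin ℓ → ι ⊕ Fin ℓ)).ncard = ℓ := by
              rw [← Set.image_univ, Set.ncard_image_of_injective _ Sum.inr_injective,
                Set.ncard_univ, Nat.card_eq_fintype_card, Fintype.card_fin]
            rw [Set.ncard_singleton, e3]
          omega
        have := hcenter
        omega
      · -- other nodes: transport to the original torso
        have hφ : Function.Injective (Sum.map (id : V → V) (Sum.inl : ι → ι ⊕ Fin ℓ)) :=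
          Function.Injective.sumMap (fun _ _ h => h) Sum.inl_injective
        rw [refineBags_inl hat, torso_refine_eq htcd hstar hat] at hH
        have himg : (Sum.inl '' X a : Set (V ⊕ (ι ⊕ Fin ℓ)))
            = (Sum.map (id : V → V) Sum.inl) '' (Sum.inl '' X a) := by
          rw [Set.image_image]
          rfl
        rw [himg] at hH
        obtain ⟨H₀, h3c, hcard⟩ := isThreeCenter_mapG_rev hφ hH
        rw [hcard]
        refine hin.2 a ?_ H₀ h3c
        intro hl
        exact hnl (isLeaf_refine_of_isLeaf hat hl)
    · exact absurd (isLeaf_inr i) hnl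
  · -- strictly more non-empty bags
    obtain ⟨j₁, j₂, hj, h1, h2⟩ := hnt
    have hbagof : ∀ j : Option (Fin ℓ),
        refineBags X t Xs (j.elim (Sum.inl t) Sum.inr) = Xs j := by
      intro j
      rcases j with _ | i
      · exact refineBags_inl_t
      · rfl
    have hfne : (j₁.elim (Sum.inl t) Sum.inr : ι ⊕ Fin ℓ) ≠ j₂.elim (Sum.inl t) Sum.inr := by
      rcases j₁ with _ | i₁ <;> rcases j₂ with _ | i₂ <;> simp_all
    have htA : t ∈ {s : ι | (X s).Nonempty} := by
      have : (X t).ncard ≠ 0 := by omega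
      exact Set.nonempty_of_ncard_ne_zero this
    set A := {s : ι | (X s).Nonempty} with hA
    set B := {s : ι ⊕ Fin ℓ | (refineBags X t Xs s).Nonempty} with hB
    set U : Set (ι ⊕ Fin ℓ) := Sum.inl '' (A \ {t}) ∪
      {j₁.elim (Sum.inl t) Sum.inr, j₂.elim (Sum.inl t) Sum.inr} with hU
    have hUB : U ⊆ B := by
      rintro x (⟨s, ⟨hs, hst⟩, rfl⟩ | hx)
      · show (refineBags X t Xs (Sum.inl s)).Nonempty
        rw [refineBags_inl hst]
        exact hs
      · rcases hx with rfl | rfl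
        · show (refineBags X t Xs _).Nonempty
          rw [hbagof j₁]
          exact h1
        · show (refineBags X t Xs _).Nonempty
          rw [hbagof j₂]
          exact h2
    have hdisj : Disjoint (Sum.inl '' (A \ {t}))
        ({j₁.elim (Sum.inl t) Sum.inr, j₂.elim (Sum.inl t) Sum.inr} : Set (ι ⊕ Fin ℓ)) := by
      rw [Set.disjoint_right]
      rintro x (rfl | rfl) ⟨s, ⟨-, hst⟩, heq⟩ <;>
        rcases j₁ with _ | i₁ <;> rcases j₂ with _ | i₂ <;> simp_all
    have hcardU : U.ncard = (A \ {t}).ncard + 2 := by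
      rw [hU, Set.ncard_union_eq hdisj ((Set.toFinite _)) ((Set.toFinite _)),
        Set.ncard_image_of_injective _ Sum.inl_injective, Set.ncard_pair hfne]
    have hdiff : (A \ {t}).ncard = A.ncard - 1 := Set.ncard_diff_singleton_of_mem htA
    have hposA : 1 ≤ A.ncard := by
      have : A.Finite := Set.toFinite _
      have := Set.ncard_pos this |>.mpr ⟨t, htA⟩
      omega
    have hle : U.ncard ≤ B.ncard := Set.ncard_le_ncard hUB (Set.toFinite _)
    omega


end
end

section
/- With G, k, w = n³/2 + k, and G' as in the Min Bisection reduction (V induces G, |Q| = w−2, each pair x,y ∈ Q joined by w+1 common neighbors C_{x,y}, each vertex of V adjacent to n² vertices of Q), if G' has tree-cut width at most w, then G admits a bipartition (V_1, V_2) of its vertex set with |V_1| = |V_2| = n/2 and |δ_G(V_1,V_2)| ≤ k. -/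
open scoped Classical

noncomputable section
open scoped Classical
open MGraph


-- ===== Auxiliary lemmas =====

section Aux

variable {W : Type}

lemma finset_card_le_filter {α : Type} (F : Finset α) (M : Multiset α) (p : α → Prop)
    [DecidablePred p] (h : ∀ a ∈ F, a ∈ M ∧ p a) : F.card ≤ Multiset.card (M.filter p) := by
  have hle : F.val ≤ M.filter p := by
    rw [Multiset.le_iff_count]
    intro a
    by_cases ha : a ∈ F
    · rw [Multiset.count_eq_one_of_mem F.nodup ha]
      rw [Multiset.one_le_count_iff_mem, Multiset.mem_filter]
      exact ⟨(h a ha).1, (h a ha).2⟩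
    · rw [Multiset.count_eq_zero_of_notMem (fun hc => ha hc)]
      exact Nat.zero_le _
  simpa using Multiset.card_le_card hle

lemma multiset_mem_filter_intro {α : Type} {p : α → Prop} (inst : DecidablePred p)
    {s : Multiset α} {a : α} (h1 : a ∈ s) (h2 : p a) : a ∈ @Multiset.filter α p inst s :=
  (@Multiset.mem_filter α p inst a s).2 ⟨h1, h2⟩

lemma card_le_cut {V : Type} (G : MGraph V) (A B : Set V) (F : Finset (Sym2 V))
    (h : ∀ e ∈ F, e ∈ G.edges ∧ ∃ p ∈ A, ∃ q ∈ B, e = s(p, q)) :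
    F.card ≤ Multiset.card (G.cut A B) := by
  rw [MGraph.cut]
  exact finset_card_le_filter F G.edges _ h

lemma card_le_adhesion {V ι : Type} (G : MGraph V) (T : SimpleGraph ι) (X : ι → Set V)
    (a b : ι) (F : Finset (Sym2 V))
    (h : ∀ e ∈ F, e ∈ G.edges ∧ ∃ p ∈ MGraph.edgeSide T X a b,
      ∃ q ∈ MGraph.edgeSide T X b a, e = s(p, q)) :
    F.card ≤ Multiset.card (MGraph.adhesion G T X a b) := by
  rw [MGraph.adhesion]
  exact card_le_cut G _ _ F h

lemma centerStep_spec {X : Set W} {G G' : MGraph W} (h : MGraph.CenterStep X G G') :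
    ∃ x, x ∉ X ∧ x ∈ G.verts ∧ G'.verts = G.verts \ {x} ∧
      (Multiset.card (G.edges.filter (fun e => x ∈ e)) ≤ 2) ∧
      ∀ e ∈ G.edges, x ∉ e → e ∈ G'.edges := by
  rcases h with ⟨x,y,z,hxX,hxv,hyz,hxy,hxz,hfil,rfl⟩ | ⟨x,hxX,hxv,hdeg,hsub,rfl⟩
  · refine ⟨x, hxX, hxv, rfl, by rw [hfil]; simp, fun e he hxe => ?_⟩
    exact Multiset.mem_add.2 (Or.inl (Multiset.mem_filter.2 ⟨he, hxe⟩))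
  · exact ⟨x, hxX, hxv, rfl, hdeg, fun e he hxe => Multiset.mem_filter.2 ⟨he, hxe⟩⟩

lemma exists_threeCenter (X : Set W) (G : MGraph W) (hfin : G.verts.Finite) :
    ∃ H, MGraph.IsThreeCenter X G H := by
  generalize hn : G.verts.ncard = N
  induction N using Nat.strong_induction_on generalizing G with
  | _ N ih =>
    by_cases h : ∃ G', MGraph.CenterStep X G G'
    · obtain ⟨G', hstep⟩ := h
      obtain ⟨x, _, hxv, hv, _, _⟩ := centerStep_spec hstep
      have hfin' : G'.verts.Finite := by rw [hv]; exact hfin.diff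
      have hlt : G'.verts.ncard < N := by
        rw [hv, ← hn]
        exact Set.ncard_lt_ncard (Set.sdiff_singleton_ssubset.2 hxv) hfin
      obtain ⟨H, h1, h2⟩ := ih _ hlt G' hfin' rfl
      exact ⟨H, Relation.ReflTransGen.head hstep h1, h2⟩
    · exact ⟨G, Relation.ReflTransGen.refl, fun H' hH' => h ⟨H', hH'⟩⟩

lemma threeCenter_protected (X : Set W) {G H : MGraph W}
    (h : Relation.ReflTransGen (MGraph.CenterStep X) G H) :
    H.verts ⊆ G.verts ∧ X ∩ G.verts ⊆ H.verts := by
  induction h with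
  | refl => exact ⟨subset_rfl, Set.inter_subset_right⟩
  | tail hsteps hstep ih =>
    obtain ⟨x, hxX, _, hv, _, _⟩ := centerStep_spec hstep
    refine ⟨?_, fun v hv' => ?_⟩
    · rw [hv]; exact Set.diff_subset.trans ih.1
    · rw [hv]
      exact ⟨ih.2 hv', fun h' => hxX (Set.mem_singleton_iff.1 h' ▸ hv'.1)⟩

lemma threeCenter_keep (X : Set W) {G H : MGraph W}
    (h : Relation.ReflTransGen (MGraph.CenterStep X) G H) (u : W) (E : Finset (Sym2 W))
    (hu : u ∈ G.verts)
    (hE : ∀ e ∈ E, e ∈ G.edges ∧ u ∈ e ∧ ∀ v ∈ e, v ≠ u → v ∈ X)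
    (hcard : 3 ≤ E.card) :
    u ∈ H.verts := by
  suffices main : u ∈ H.verts ∧ ∀ e ∈ E, e ∈ H.edges ∧ u ∈ e ∧ ∀ v ∈ e, v ≠ u → v ∈ X by
    exact main.1
  induction h with
  | refl => exact ⟨hu, hE⟩
  | tail hsteps hstep ih =>
      obtain ⟨hu', hE'⟩ := ih
      obtain ⟨x, hxX, hxv, hv, hdeg, hkeep⟩ := centerStep_spec hstep
      have hxu : x ≠ u := by
        rintro rfl
        have h3 : E.card ≤ 2 :=
          le_trans (finset_card_le_filter E _ _
            (fun e he => ⟨(hE' e he).1, (hE' e he).2.1⟩)) hdeg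
        omega
      have hxe : ∀ e ∈ E, x ∉ e := fun e he hx =>
        hxX ((hE' e he).2.2 x hx hxu)
      refine ⟨by rw [hv]; exact ⟨hu', fun h' => hxu (Set.mem_singleton_iff.1 h').symm⟩,
        fun e he => ⟨hkeep e (hE' e he).1 (hxe e he), (hE' e he).2.1, (hE' e he).2.2⟩⟩

end Aux


section TreeAux

open SimpleGraph

variable {ι : Type} {T : SimpleGraph ι}

lemma delete_reach_dichotomy {v0 v1 : ι} {a t : ι} (p : T.Walk a t)
    (hbase : (T.deleteEdges {s(v0,v1)}).Reachable v0 a ∨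
      (T.deleteEdges {s(v0,v1)}).Reachable v1 a) :
    (T.deleteEdges {s(v0,v1)}).Reachable v0 t ∨
      (T.deleteEdges {s(v0,v1)}).Reachable v1 t := by
  induction p with
  | nil => exact hbase
  | @cons x y z h q ih =>
    apply ih
    by_cases he : s(x, y) = s(v0, v1)
    · rcases Sym2.eq_iff.1 he with ⟨rfl, rfl⟩ | ⟨rfl, rfl⟩
      · exact Or.inr (Reachable.refl _)
      · exact Or.inl (Reachable.refl _)
    · have hadj : (T.deleteEdges {s(v0,v1)}).Adj x y := by
        rw [SimpleGraph.deleteEdges_adj]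
        exact ⟨h, by simpa using he⟩
      rcases hbase with hb | hb
      · exact Or.inl (hb.trans hadj.reachable)
      · exact Or.inr (hb.trans hadj.reachable)

lemma walk_avoid_to_induce {t : ι} {x y : ι} (p : T.Walk x y) (ht : t ∉ p.support) :
    MGraph.ReachAvoid T t x y := by
  induction p with
  | nil =>
    rename_i u
    have hx : u ∈ ({t}ᶜ : Set ι) := by
      simpa using fun h => ht (by simp [h])
    exact ⟨hx, hx, Reachable.refl _⟩
  | @cons u v z h q ih =>
    rw [SimpleGraph.Walk.support_cons, List.mem_cons] at ht
    push_neg at ht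
    obtain ⟨ht1, ht2⟩ := ht
    obtain ⟨hv, hz, hr⟩ := ih ht2
    have hu : u ∈ ({t}ᶜ : Set ι) := by simpa using fun h => ht1 (by rw [h])
    refine ⟨hu, hz, Reachable.trans (Adj.reachable ?_) hr⟩
    show (T.induce ({t}ᶜ : Set ι)).Adj ⟨u, hu⟩ ⟨v, hv⟩
    simpa using h

lemma reachAvoid_to_delete {t x y : ι} (h : MGraph.ReachAvoid T t x y)
    (d : Sym2 ι) (hd : t ∈ d) : (T.deleteEdges {d}).Reachable x y := by
  obtain ⟨hx, hy, ⟨p⟩⟩ := h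
  suffices H : ∀ (u v : ({t}ᶜ : Set ι)) (p : (T.induce ({t}ᶜ : Set ι)).Walk u v),
      (T.deleteEdges {d}).Reachable u.1 v.1 from H _ _ p
  intro u v p
  induction p with
  | nil => exact Reachable.refl _
  | @cons u' v' z' h q ih =>
    refine Reachable.trans (Adj.reachable ?_) ih
    rw [SimpleGraph.deleteEdges_adj]
    have hadj : T.Adj u'.1 v'.1 := by simpa using h
    refine ⟨hadj, ?_⟩
    intro hmem
    rw [Set.mem_singleton_iff] at hmem
    rw [← hmem] at hd
    rcases Sym2.mem_iff.1 hd with h1 | h1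
    · exact u'.2 (by simp [h1.symm])
    · exact v'.2 (by simp [h1.symm])

lemma tree_separation (hT : T.IsTree) {a b : ι} (hab : a ≠ b) :
    ∃ v1, T.Adj a v1 ∧ (T.deleteEdges {s(a, v1)}).Reachable v1 b ∧
      MGraph.ReachAvoid T a v1 b := by
  obtain ⟨w⟩ := hT.isConnected.preconnected a b
  have hpath : (w.toPath : T.Walk a b).IsPath := w.toPath.2
  set p : T.Walk a b := (w.toPath : T.Walk a b) with hp
  clear_value p
  clear hp
  cases p with
  | nil => exact absurd rfl hab
  | @cons _ v1 _ h r =>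
    rw [SimpleGraph.Walk.cons_isPath_iff] at hpath
    obtain ⟨hr, ha⟩ := hpath
    have hedges : ∀ e ∈ r.edges, e ∉ ({s(a, v1)} : Set (Sym2 ι)) := by
      intro e he hmem
      rw [Set.mem_singleton_iff] at hmem
      subst hmem
      exact ha (r.fst_mem_support_of_mem_edges he)
    exact ⟨v1, h, ⟨r.toDeleteEdges _ hedges⟩, walk_avoid_to_induce r ha⟩

end TreeAux


section TcwAux

lemma tcwLE_mono {V : Type} {G : MGraph V} {w w' : ℕ} (h : MGraph.tcwLE G w)
    (hw : w ≤ w') : MGraph.tcwLE G w' := by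
  obtain ⟨ι, hfin, T, X, hTCD, h1, h2⟩ := h
  exact ⟨ι, hfin, T, X, hTCD, fun a b hab => (h1 a b hab).trans hw,
    fun t H hH => (h2 t H hH).trans hw⟩

lemma tcwLE_of_fintype {α : Type} [Fintype α] (G : SimpleGraph α) :
    MGraph.tcwLE G.toMGraph (Fintype.card α) := by
  classical
  refine ⟨Unit, inferInstance, ⊥, fun _ => Set.univ, ⟨⟨?_, ?_⟩, ?_, ?_⟩, ?_, ?_⟩
  · have : Nonempty Unit := ⟨()⟩
    exact SimpleGraph.Connected.mk
      (fun a b => ⟨SimpleGraph.Walk.nil.copy rfl (Subsingleton.elim _ _)⟩)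
  · exact SimpleGraph.isAcyclic_bot
  · intro a b hab
    exact absurd (Subsingleton.elim a b) hab
  · rw [Set.iUnion_const]
    rfl
  · intro a b hab
    exact absurd hab (by simp)
  · intro t H hH
    have hsub := (threeCenter_protected _ hH.1).1
    have htv : (MGraph.torso G.toMGraph ⊥ (fun _ => Set.univ) t).verts ⊆
        Sum.inl '' Set.univ := by
      intro v hv
      rcases hv with hv | hv
      · exact hv
      · obtain ⟨s, hs, -⟩ := hv
        exact absurd hs.1 (by simp)
    calc H.verts.ncard ≤ (Sum.inl '' (Set.univ : Set α) : Set (α ⊕ Unit)).ncard :=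
          Set.ncard_le_ncard (hsub.trans htv) (Set.toFinite _)
      _ = (Set.univ : Set α).ncard := Set.ncard_image_of_injective _ Sum.inl_injective
      _ = Fintype.card α := by rw [Set.ncard_univ, Nat.card_eq_fintype_card]

lemma tcw_le_extract {α : Type} [Fintype α] (G : SimpleGraph α) {w : ℕ}
    (h : MGraph.tcw G.toMGraph ≤ w) : MGraph.tcwLE G.toMGraph w := by
  have hne : {w' | MGraph.tcwLE G.toMGraph w'}.Nonempty :=
    ⟨max (Fintype.card α) w, tcwLE_mono (tcwLE_of_fintype G) (le_max_left _ _)⟩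
  have hmem := Nat.sInf_mem hne
  exact tcwLE_mono hmem h

end TcwAux

set_option maxHeartbeats 2000000 in
theorem tcw_to_bisection (n k : ℕ) (hn : Even n) (hk : k ≤ n ^ 2)
    (G : SimpleGraph (Fin n))
    (f : Fin n → Finset (Fin (bisectW n k - 2))) (hf : ∀ a, (f a).card = n ^ 2)
    (htcw : tcw (bisectG G (bisectW n k) f).toMGraph ≤ bisectW n k) :
    ∃ V₁ V₂ : Finset (Fin n), Disjoint V₁ V₂ ∧ V₁ ∪ V₂ = Finset.univ ∧
      V₁.card = n / 2 ∧ V₂.card = n / 2 ∧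
      ((V₁ ×ˢ V₂).filter fun p => G.Adj p.1 p.2).card ≤ k := by
  classical
  -- trivial case n = 0
  rcases Nat.eq_zero_or_pos n with hn0 | hn0
  · subst hn0
    exact ⟨∅, ∅, disjoint_bot_left, by simp, by simp, by simp, by simp⟩
  obtain ⟨m, hm⟩ := hn
  have hmpos : 0 < m := by omega
  have hn2 : n ^ 2 = 4 * m ^ 2 := by subst hm; ring
  have hn3 : n ^ 3 / 2 = 4 * m ^ 3 := by
    have : n ^ 3 = 2 * (4 * m ^ 3) := by subst hm; ring
    omega
  -- trivial case: k ≥ m * m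
  by_cases hktriv : m * m ≤ k
  · obtain ⟨V₁, -, hcard⟩ := Finset.exists_subset_card_eq
      (show n / 2 ≤ (Finset.univ : Finset (Fin n)).card by simp; omega)
    have hc2 : V₁ᶜ.card = n / 2 := by
      rw [Finset.card_compl, hcard]
      simp only [Fintype.card_fin]
      omega
    refine ⟨V₁, V₁ᶜ, disjoint_compl_right, by simp, hcard, hc2, ?_⟩
    calc ((V₁ ×ˢ V₁ᶜ).filter fun p => G.Adj p.1 p.2).card
        ≤ (V₁ ×ˢ V₁ᶜ).card := Finset.card_filter_le _ _
      _ = (n / 2) * (n / 2) := by rw [Finset.card_product, hcard, hc2]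
      _ ≤ k := by
          have hm' : n / 2 = m := by omega
          rw [hm']; exact hktriv
  push_neg at hktriv
  -- main case: generalize `bisectW n k` to `N`
  suffices key : ∀ (N : ℕ), N = 4 * m ^ 3 + k →
      ∀ (f : Fin n → Finset (Fin (N - 2))), (∀ a, (f a).card = n ^ 2) →
      MGraph.tcw (bisectG G N f).toMGraph ≤ N →
      ∃ V₁ V₂ : Finset (Fin n), Disjoint V₁ V₂ ∧ V₁ ∪ V₂ = Finset.univ ∧
        V₁.card = n / 2 ∧ V₂.card = n / 2 ∧
        ((V₁ ×ˢ V₂).filter fun p => G.Adj p.1 p.2).card ≤ k by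
    exact key (bisectW n k) (by rw [bisectW, hn3]) f hf htcw
  clear f hf htcw
  intro N hNval f hf htcw
  have a₀ : Fin n := ⟨0, hn0⟩
  have hN2 : n ^ 2 ≤ N - 2 := by
    have h1 : (f a₀).card ≤ Fintype.card (Fin (N - 2)) := Finset.card_le_univ _
    rwa [hf a₀, Fintype.card_fin] at h1
  have hm2 : 2 ≤ m := by
    by_contra hm1
    have : m = 1 := by omega
    subst this
    simp only [one_pow, mul_one] at hn2 hNval
    omega
  have hNbig : 32 ≤ N := by
    have h8 : 2 ^ 3 ≤ m ^ 3 := Nat.pow_le_pow_left hm2 3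
    norm_num at h8
    omega
  -- extract a tree-cut decomposition of width ≤ N
  obtain ⟨ι, hι, T, X, ⟨hTree, hdisj, hunion⟩, hwid1, hwid2⟩ := tcw_le_extract _ htcw
  haveI : Finite ι := hι
  set Gm := (bisectG G N f).toMGraph with hGm
  -- basic facts
  have hverts : Gm.verts = Set.univ := rfl
  have hedge : ∀ x y : BisV n N, s(x, y) ∈ Gm.edges ↔ (bisectG G N f).Adj x y := by
    intro x y
    rw [hGm, SimpleGraph.toMGraph]
    show s(x,y) ∈ (Set.toFinite _).toFinset.val ↔ _
    rw [Finset.mem_val, Set.Finite.mem_toFinset, SimpleGraph.mem_edgeSet]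
  -- the bag of each vertex
  have hbagex : ∀ v : BisV n N, ∃ t, v ∈ X t := by
    intro v
    have : v ∈ ⋃ t, X t := by rw [hunion]; trivial
    exact Set.mem_iUnion.1 this
  choose bag hbagmem using hbagex
  have hbagu : ∀ (v : BisV n N) (t : ι), v ∈ X t → bag v = t := by
    intro v t hvt
    by_contra hne
    exact Set.disjoint_left.1 (hdisj hne) (hbagmem v) hvt
  -- notation for the special vertices
  set vQ : Fin (N - 2) → BisV n N := fun q => Sum.inr (Sum.inl q) with hvQ
  have hvQinj : Function.Injective vQ :=
    fun a b h => by simpa [hvQ] using h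
  -- Step 1: all of Q lies in one bag
  have hpair : ∀ x y : Fin (N - 2), x < y → bag (vQ x) = bag (vQ y) := by
    intro x y hxy
    by_contra hne
    obtain ⟨v1, hadj, hreach, -⟩ := tree_separation hTree hne
    set A := MGraph.edgeSide T X (bag (vQ x)) v1 with hA
    set B := MGraph.edgeSide T X v1 (bag (vQ x)) with hB
    have hxA : vQ x ∈ A := Set.mem_biUnion (SimpleGraph.Reachable.refl _) (hbagmem _)
    have hyB : vQ y ∈ B := by
      refine Set.mem_biUnion ?_ (hbagmem (vQ y))
      show (T.deleteEdges {s(v1, bag (vQ x))}).Reachable v1 (bag (vQ y))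
      rw [Sym2.eq_swap]
      exact hreach
    have hdich : ∀ v : BisV n N, v ∈ A ∨ v ∈ B := by
      intro v
      obtain ⟨w⟩ := hTree.isConnected.preconnected (bag (vQ x)) (bag v)
      rcases delete_reach_dichotomy w (Or.inl (SimpleGraph.Reachable.refl _)) with h | h
      · exact Or.inl (Set.mem_biUnion h (hbagmem v))
      · refine Or.inr (Set.mem_biUnion ?_ (hbagmem v))
        show (T.deleteEdges {s(v1, bag (vQ x))}).Reachable v1 (bag v)
        rw [Sym2.eq_swap]
        exact h
    set cp : {p : Fin (N-2) × Fin (N-2) // p.1 < p.2} := ⟨(x, y), hxy⟩ with hcp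
    set vC : Fin (N + 1) → BisV n N := fun c => Sum.inr (Sum.inr (cp, c)) with hvC
    have hCx : ∀ c, s(vQ x, vC c) ∈ Gm.edges := by
      intro c
      rw [hedge]
      exact (SimpleGraph.fromRel_adj _ _ _).2 ⟨by simp [hvQ, hvC], Or.inl (Or.inl rfl)⟩
    have hCy : ∀ c, s(vC c, vQ y) ∈ Gm.edges := by
      intro c
      rw [hedge]
      exact (SimpleGraph.fromRel_adj _ _ _).2 ⟨by simp [hvQ, hvC], Or.inr (Or.inr rfl)⟩
    set g : Fin (N + 1) → Sym2 (BisV n N) :=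
      fun c => if vC c ∈ B then s(vQ x, vC c) else s(vC c, vQ y) with hg
    have hgmem : ∀ c, g c ∈ Gm.edges ∧ ∃ p ∈ A, ∃ q ∈ B, g c = s(p, q) := by
      intro c
      simp only [hg]
      by_cases hc : vC c ∈ B
      · rw [if_pos hc]
        exact ⟨hCx c, vQ x, hxA, vC c, hc, rfl⟩
      · rw [if_neg hc]
        have hcA : vC c ∈ A := (hdich (vC c)).resolve_right hc
        exact ⟨hCy c, vC c, hcA, vQ y, hyB, rfl⟩
    have hginj : Function.Injective g := by
      intro c1 c2 h
      have hmem : vC c1 ∈ g c2 := by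
        rw [← h]
        simp only [hg]
        by_cases hc : vC c1 ∈ B
        · rw [if_pos hc]
          exact Sym2.mem_mk_right _ _
        · rw [if_neg hc]
          exact Sym2.mem_mk_left _ _
      simp only [hg] at hmem
      split_ifs at hmem with hc
      · rcases Sym2.mem_iff.1 hmem with h' | h'
        · exact absurd h' (by simp [hvC, hvQ])
        · simpa [hvC] using h'
      · rcases Sym2.mem_iff.1 hmem with h' | h'
        · simpa [hvC] using h'
        · exact absurd h' (by simp [hvC, hvQ])
    have hcard1 : N + 1 ≤ Multiset.card (MGraph.adhesion Gm T X (bag (vQ x)) v1) := by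
      have hh := card_le_adhesion Gm T X (bag (vQ x)) v1 (Finset.univ.image g) ?_
      · rwa [Finset.card_image_of_injective _ hginj, Finset.card_univ,
          Fintype.card_fin] at hh
      · intro e he
        obtain ⟨c, -, rfl⟩ := Finset.mem_image.1 he
        exact hgmem c
    have hcard2 := hwid1 _ _ hadj
    omega
  have hQsame : ∀ x y : Fin (N - 2), bag (vQ x) = bag (vQ y) := by
    intro x y
    rcases lt_trichotomy x y with h | h | h
    · exact hpair x y h
    · rw [h]
    · exact (hpair y x h).symm
  have hNpos : 0 < N - 2 := by omega
  set t₀ := bag (vQ ⟨0, hNpos⟩) with ht₀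
  have hQ0 : ∀ q : Fin (N - 2), vQ q ∈ X t₀ := by
    intro q
    rw [ht₀, ← hQsame q ⟨0, hNpos⟩]
    exact hbagmem _
  -- Step 2: component structure around t₀
  set comp : Fin n → ι := fun a => MGraph.compOf T X t₀ (Sum.inl a) with hcompdef
  have hcomp : ∀ a : Fin n, Sum.inl a ∉ X t₀ →
      T.Adj t₀ (comp a) ∧ MGraph.ReachAvoid T t₀ (comp a) (bag (Sum.inl a)) := by
    intro a ha
    have hta : t₀ ≠ bag (Sum.inl a) := by
      intro h
      exact ha (h ▸ hbagmem (Sum.inl a))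
    obtain ⟨v1, hadj, hreach, hravoid⟩ := tree_separation hTree hta
    have hEx : ∃ s, T.Adj t₀ s ∧ ∃ t', Sum.inl a ∈ X t' ∧ MGraph.ReachAvoid T t₀ s t' :=
      ⟨v1, hadj, bag (Sum.inl a), hbagmem _, hravoid⟩
    have hchoose : comp a = hEx.choose := by
      rw [hcompdef]
      simp only [MGraph.compOf, dif_pos hEx]
    obtain ⟨hadj', t', ht'mem, ht'ra⟩ := hEx.choose_spec
    rw [← hchoose] at hadj' ht'ra
    have ht'eq : t' = bag (Sum.inl a) := (hbagu _ _ ht'mem).symm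
    exact ⟨hadj', ht'eq ▸ ht'ra⟩
  -- Step 3: membership of component vertices in the 3-center H
  obtain ⟨H, hH⟩ := exists_threeCenter (Sum.inl '' (X t₀)) (MGraph.torso Gm T X t₀)
    (Set.toFinite _)
  have hHcard : H.verts.ncard ≤ N := hwid2 t₀ H hH
  have hXpH : Sum.inl '' (X t₀) ⊆ H.verts := by
    intro v hv
    exact (threeCenter_protected _ hH.1).2 ⟨hv, Or.inl hv⟩
  have htorv : ∀ a : Fin n, Sum.inl a ∉ X t₀ →
      Sum.inr (comp a) ∈ (MGraph.torso Gm T X t₀).verts := by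
    intro a ha
    exact Or.inr ⟨comp a, ⟨(hcomp a ha).1, bag (Sum.inl a), Sum.inl a, hbagmem _,
      (hcomp a ha).2⟩, rfl⟩
  have htore : ∀ a : Fin n, Sum.inl a ∉ X t₀ → ∀ q ∈ f a,
      s(Sum.inr (comp a), Sum.inl (vQ q)) ∈ (MGraph.torso Gm T X t₀).edges := by
    intro a ha q hq
    have hbase : s(Sum.inl a, vQ q) ∈ Gm.edges := by
      rw [hedge]
      refine (SimpleGraph.fromRel_adj _ _ _).2 ⟨by simp [hvQ], Or.inl ?_⟩
      exact hq
    refine multiset_mem_filter_intro _ ?_ (by simp)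
    refine Multiset.mem_map.2 ⟨s(Sum.inl a, vQ q), hbase, ?_⟩
    rw [Sym2.map_pair_eq]
    have h1 : MGraph.torsoMap T X t₀ (Sum.inl a) = Sum.inr (comp a) := by
      rw [MGraph.torsoMap, if_neg ha, hcompdef]
    have h2 : MGraph.torsoMap T X t₀ (vQ q) = Sum.inl (vQ q) := by
      rw [MGraph.torsoMap, if_pos (hQ0 q)]
    rw [h1, h2]
  have hcompH : ∀ a : Fin n, Sum.inl a ∉ X t₀ → Sum.inr (comp a) ∈ H.verts := by
    intro a ha
    refine threeCenter_keep _ hH.1 _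
      ((f a).image (fun q => s(Sum.inr (comp a), Sum.inl (vQ q)))) (htorv a ha) ?_ ?_
    · intro e he
      obtain ⟨q, hq, rfl⟩ := Finset.mem_image.1 he
      refine ⟨htore a ha q hq, Sym2.mem_mk_left _ _, ?_⟩
      intro v hv hvne
      rcases Sym2.mem_iff.1 hv with h | h
      · exact absurd h hvne
      · exact h ▸ ⟨vQ q, hQ0 q, rfl⟩
    · have hinj : Function.Injective (fun q => s((Sum.inr (comp a) : BisV n N ⊕ ι),
          Sum.inl (vQ q))) := by
        intro q1 q2 h
        rcases Sym2.eq_iff.1 h with ⟨-, h2⟩ | ⟨h2, -⟩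
        · exact hvQinj (Sum.inl_injective h2)
        · exact absurd h2 (by simp)
      rw [Finset.card_image_of_injective _ hinj, hf a, hn2]
      nlinarith
  -- Step 4: counting |X t₀| and the number of components
  set P : Finset (Fin n) := Finset.univ.filter (fun a => Sum.inl a ∈ X t₀) with hP
  set SS : Finset ι :=
    (Finset.univ.filter (fun a : Fin n => Sum.inl a ∉ X t₀)).image comp with hSS
  have hcount : (N - 2) + P.card + SS.card ≤ N := by
    have hsub : (Sum.inl '' (X t₀) ∪ Sum.inr '' (↑SS : Set ι) : Set (BisV n N ⊕ ι))
        ⊆ H.verts := by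
      rintro v (hv | hv)
      · exact hXpH hv
      · obtain ⟨s, hs, rfl⟩ := hv
        obtain ⟨a, hafil, rfl⟩ := Finset.mem_image.1 (Finset.mem_coe.1 hs)
        exact hcompH a (Finset.mem_filter.1 hafil).2
    have hd1 : Disjoint (Sum.inl '' (X t₀) : Set (BisV n N ⊕ ι)) (Sum.inr '' ↑SS) := by
      rw [Set.disjoint_left]
      rintro v ⟨x, -, rfl⟩ ⟨y, -, h⟩
      exact Sum.inl_ne_inr h.symm
    have hle1 : (Sum.inl '' (X t₀) ∪ Sum.inr '' ↑SS : Set (BisV n N ⊕ ι)).ncard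
        ≤ H.verts.ncard := Set.ncard_le_ncard hsub (Set.toFinite _)
    rw [Set.ncard_union_eq hd1 (Set.toFinite _) (Set.toFinite _),
      Set.ncard_image_of_injective _ Sum.inl_injective,
      Set.ncard_image_of_injective _ Sum.inr_injective, Set.ncard_coe_finset] at hle1
    have hXlow : (N - 2) + P.card ≤ (X t₀).ncard := by
      have hsub2 : (Set.range vQ ∪ Sum.inl '' (↑P : Set (Fin n)) : Set (BisV n N))
          ⊆ X t₀ := by
        rintro v (⟨q, rfl⟩ | ⟨a, ha, rfl⟩)
        · exact hQ0 q
        · exact (Finset.mem_filter.1 (Finset.mem_coe.1 ha)).2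
      have hd2 : Disjoint (Set.range vQ) (Sum.inl '' (↑P : Set (Fin n))) := by
        rw [Set.disjoint_left]
        rintro v ⟨q, rfl⟩ ⟨a, -, h⟩
        exact (by simp [hvQ] : (Sum.inl a : BisV n N) ≠ vQ q) h
      have hle2 := Set.ncard_le_ncard hsub2 (Set.toFinite _)
      rw [Set.ncard_union_eq hd2 (Set.toFinite _) (Set.toFinite _),
        Set.ncard_image_of_injective _ Sum.inl_injective, Set.ncard_coe_finset,
        ← Set.image_univ, Set.ncard_image_of_injective _ hvQinj, Set.ncard_univ,
        Nat.card_eq_fintype_card, Fintype.card_fin] at hle2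
      exact hle2
    omega
  have hPSS : P.card + SS.card ≤ 2 := by omega
  -- Step 5: each component contains at most m vertices of V, and adhesion bound
  set Vs : ι → Finset (Fin n) :=
    fun s => Finset.univ.filter (fun a => Sum.inl a ∉ X t₀ ∧ comp a = s) with hVs
  have hadhbound : ∀ s ∈ SS, ∀ (extra : Finset (Sym2 (BisV n N))),
      (∀ e ∈ extra, e ∈ Gm.edges ∧ (∀ c : Fin (N-2), vQ c ∉ e) ∧
        ∃ x ∈ MGraph.edgeSide T X t₀ s, ∃ y ∈ MGraph.edgeSide T X s t₀, e = s(x, y)) →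
      (Vs s).card * n ^ 2 + extra.card ≤ N := by
    intro s hs extra hextra
    obtain ⟨aw, hawfil, hawcomp⟩ := Finset.mem_image.1 hs
    have hawX : Sum.inl aw ∉ X t₀ := (Finset.mem_filter.1 hawfil).2
    have hadjs : T.Adj t₀ s := hawcomp ▸ (hcomp aw hawX).1
    have hsideB : ∀ a : Fin n, a ∈ Vs s →
        (Sum.inl a : BisV n N) ∈ MGraph.edgeSide T X s t₀ := by
      intro a ha
      obtain ⟨-, haX, hacomp⟩ := Finset.mem_filter.1 ha
      have hra := (hcomp a haX).2
      rw [hacomp] at hra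
      have hreach : (T.deleteEdges {s(s, t₀)}).Reachable s (bag (Sum.inl a)) :=
        reachAvoid_to_delete hra _ (Sym2.mem_mk_right _ _)
      exact Set.mem_biUnion hreach (hbagmem _)
    have hsideQ : ∀ q : Fin (N - 2), vQ q ∈ MGraph.edgeSide T X t₀ s :=
      fun q => Set.mem_biUnion (SimpleGraph.Reachable.refl _) (hQ0 q)
    set F : Finset (Sym2 (BisV n N)) :=
      (Vs s).biUnion (fun a => (f a).image (fun q => s(Sum.inl a, vQ q))) with hF
    have hdisjF : Disjoint F extra := by
      rw [Finset.disjoint_left]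
      intro e heF heX
      obtain ⟨a, -, he⟩ := Finset.mem_biUnion.1 heF
      obtain ⟨q, -, rfl⟩ := Finset.mem_image.1 he
      exact (hextra _ heX).2.1 q (Sym2.mem_mk_right _ _)
    have himginj : ∀ a : Fin n,
        Function.Injective (fun q : Fin (N-2) => s((Sum.inl a : BisV n N), vQ q)) := by
      intro a q1 q2 h
      rcases Sym2.eq_iff.1 h with ⟨-, h2⟩ | ⟨h2, -⟩
      · exact hvQinj h2
      · exact absurd h2 (by simp [hvQ])
    have hdisjU : ∀ a1 ∈ Vs s, ∀ a2 ∈ Vs s, a1 ≠ a2 →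
        Disjoint ((f a1).image (fun q => s((Sum.inl a1 : BisV n N), vQ q)))
          ((f a2).image (fun q => s((Sum.inl a2 : BisV n N), vQ q))) := by
      rintro a1 - a2 - hne
      rw [Finset.disjoint_left]
      intro e he1 he2
      obtain ⟨q1, -, rfl⟩ := Finset.mem_image.1 he1
      obtain ⟨q2, -, he⟩ := Finset.mem_image.1 he2
      rcases Sym2.eq_iff.1 he with ⟨h1, -⟩ | ⟨-, h1⟩
      · exact hne (Sum.inl_injective h1).symm
      · exact absurd h1 (by simp [hvQ])
    have hFcard : F.card = (Vs s).card * n ^ 2 := by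
      rw [hF, Finset.card_biUnion hdisjU]
      have hsame : ∀ a ∈ Vs s,
          ((f a).image (fun q => s((Sum.inl a : BisV n N), vQ q))).card = n ^ 2 := by
        intro a _
        rw [Finset.card_image_of_injective _ (himginj a), hf a]
      rw [Finset.sum_congr rfl hsame, Finset.sum_const, smul_eq_mul]
    have hmain := card_le_adhesion Gm T X t₀ s (F ∪ extra) ?_
    · rw [Finset.card_union_of_disjoint hdisjF, hFcard] at hmain
      exact le_trans hmain (hwid1 t₀ s hadjs)
    · intro e he
      rcases Finset.mem_union.1 he with heF | heX
      · obtain ⟨a, haVs, he'⟩ := Finset.mem_biUnion.1 heF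
        obtain ⟨q, hq, rfl⟩ := Finset.mem_image.1 he'
        refine ⟨?_, vQ q, hsideQ q, Sum.inl a, hsideB a haVs, Sym2.eq_swap⟩
        rw [hedge]
        refine (SimpleGraph.fromRel_adj _ _ _).2 ⟨by simp [hvQ], Or.inl ?_⟩
        exact hq
      · obtain ⟨h1, -, h3⟩ := hextra e heX
        exact ⟨h1, h3⟩
  have hVsize : ∀ s ∈ SS, (Vs s).card ≤ m := by
    intro s hs
    have h1 := hadhbound s hs ∅ (by simp)
    simp only [Finset.card_empty, Nat.add_zero] at h1
    by_contra hc
    push_neg at hc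
    have h2 : (m + 1) * (4 * m ^ 2) ≤ (Vs s).card * (4 * m ^ 2) :=
      Nat.mul_le_mul_right _ hc
    have h3 : (m + 1) * (4 * m ^ 2) = 4 * m ^ 3 + 4 * m ^ 2 := by ring
    rw [hn2] at h1
    have h4 : k < m ^ 2 := by
      have : m * m = m ^ 2 := by ring
      omega
    linarith
  -- Step 6: partition of V
  have hpart : ∀ a : Fin n, Sum.inl a ∉ X t₀ → a ∈ Vs (comp a) := by
    intro a ha
    exact Finset.mem_filter.2 ⟨Finset.mem_univ _, ha, rfl⟩
  have hrest : (Finset.univ.filter (fun a : Fin n => Sum.inl a ∉ X t₀)) = SS.biUnion Vs := by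
    ext a
    simp only [Finset.mem_filter, Finset.mem_univ, true_and, Finset.mem_biUnion]
    constructor
    · intro ha
      exact ⟨comp a, Finset.mem_image.2 ⟨a, Finset.mem_filter.2 ⟨Finset.mem_univ _, ha⟩, rfl⟩,
        hpart a ha⟩
    · rintro ⟨s, -, haVs⟩
      exact (Finset.mem_filter.1 haVs).2.1
  have hrestcard : n = P.card + (SS.biUnion Vs).card := by
    rw [← hrest, hP]
    have := Finset.card_filter_add_card_filter_not
      (s := (Finset.univ : Finset (Fin n))) (p := fun a => Sum.inl a ∈ X t₀)
    simp only [Fintype.card_fin, Finset.card_univ] at this ⊢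
    omega
  have hVdisj : ∀ s ∈ SS, ∀ s' ∈ SS, s ≠ s' → Disjoint (Vs s) (Vs s') := by
    intro s _ s' _ hne
    rw [Finset.disjoint_left]
    intro a ha ha'
    simp only [hVs, Finset.mem_filter] at ha ha'
    exact hne (ha.2.2 ▸ ha'.2.2)
  have hbicard : (SS.biUnion Vs).card = ∑ s ∈ SS, (Vs s).card :=
    Finset.card_biUnion hVdisj
  -- Step 7: conclude SS has exactly two elements and P is empty
  have hsum : ∑ s ∈ SS, (Vs s).card ≤ SS.card * m :=
    Finset.sum_le_card_nsmul _ _ _ (fun s hs => hVsize s hs)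
  have hSScases : SS.card = 0 ∨ SS.card = 1 ∨ SS.card = 2 := by omega
  have hSS2 : SS.card = 2 ∧ P.card = 0 := by
    rcases hSScases with h | h | h <;> rw [h] at hsum <;> omega
  obtain ⟨s1, s2, hs12, hSSeq⟩ := Finset.card_eq_two.1 hSS2.1
  have hs1 : s1 ∈ SS := by rw [hSSeq]; simp
  have hs2 : s2 ∈ SS := by rw [hSSeq]; simp
  have hPempty : ∀ a : Fin n, Sum.inl a ∉ X t₀ := by
    intro a ha
    have : a ∈ P := by simp [hP, ha]
    rw [Finset.card_eq_zero.1 hSS2.2] at this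
    exact absurd this (Finset.notMem_empty a)
  have hcompSS : ∀ a : Fin n, comp a ∈ SS := by
    intro a
    rw [hSS]
    exact Finset.mem_image.2 ⟨a, by simp [hPempty a], rfl⟩
  have hsumeq : (Vs s1).card + (Vs s2).card = n := by
    have h1 : n = (SS.biUnion Vs).card := by omega
    rw [hbicard, hSSeq, Finset.sum_pair hs12] at h1
    omega
  have hV1card : (Vs s1).card = m := by
    have := hVsize s1 hs1; have := hVsize s2 hs2; omega
  have hV2card : (Vs s2).card = m := by
    have := hVsize s1 hs1; omega
  -- Step 8: the final cut bound
  have hcut : ((Vs s1 ×ˢ Vs s2).filter fun p => G.Adj p.1 p.2).card ≤ k := by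
    have hV12 : Disjoint (Vs s1) (Vs s2) := hVdisj s1 hs1 s2 hs2 hs12
    set cutP := (Vs s1 ×ˢ Vs s2).filter (fun p => G.Adj p.1 p.2) with hcutP
    have hinj : Set.InjOn
        (fun p : Fin n × Fin n => s((Sum.inl p.1 : BisV n N), Sum.inl p.2)) ↑cutP := by
      intro p hp p' hp' h
      have hp1 := (Finset.mem_filter.1 (Finset.mem_coe.1 hp)).1
      have hp1' := (Finset.mem_filter.1 (Finset.mem_coe.1 hp')).1
      rw [Finset.mem_product] at hp1 hp1'
      rcases Sym2.eq_iff.1 h with ⟨h1, h2⟩ | ⟨h1, h2⟩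
      · exact Prod.ext (Sum.inl_injective h1) (Sum.inl_injective h2)
      · exfalso
        have heq : p.1 = p'.2 := Sum.inl_injective h1
        exact Finset.disjoint_left.1 hV12 hp1.1 (heq ▸ hp1'.2)
    set extra := cutP.image (fun p => s((Sum.inl p.1 : BisV n N), Sum.inl p.2)) with hex
    have hexcard : extra.card = cutP.card := Finset.card_image_of_injOn hinj
    have hcond : ∀ e ∈ extra, e ∈ Gm.edges ∧ (∀ c : Fin (N-2), vQ c ∉ e) ∧
        ∃ x ∈ MGraph.edgeSide T X t₀ s1, ∃ y ∈ MGraph.edgeSide T X s1 t₀, e = s(x, y) := by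
      intro e he
      obtain ⟨p, hp, rfl⟩ := Finset.mem_image.1 he
      obtain ⟨hp1, hpadj⟩ := Finset.mem_filter.1 hp
      rw [Finset.mem_product] at hp1
      obtain ⟨ha1, ha2⟩ := hp1
      have hX1 : Sum.inl p.1 ∉ X t₀ := hPempty p.1
      have hX2 : Sum.inl p.2 ∉ X t₀ := hPempty p.2
      have hc1 : comp p.1 = s1 := (Finset.mem_filter.1 ha1).2.2
      have hc2 : comp p.2 = s2 := (Finset.mem_filter.1 ha2).2.2
      refine ⟨?_, ?_, ?_⟩
      · rw [hedge]
        refine (SimpleGraph.fromRel_adj _ _ _).2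
          ⟨fun h => hpadj.ne (Sum.inl_injective h), Or.inl ?_⟩
        exact hpadj
      · intro c hc
        rcases Sym2.mem_iff.1 hc with h | h <;> exact absurd h (by simp [hvQ])
      · refine ⟨Sum.inl p.2, ?_, Sum.inl p.1, ?_, Sym2.eq_swap⟩
        · have hadj1 : T.Adj t₀ s1 := hc1 ▸ (hcomp p.1 hX1).1
          have hadj2 : T.Adj t₀ s2 := hc2 ▸ (hcomp p.2 hX2).1
          have hstep : (T.deleteEdges {s(t₀, s1)}).Adj t₀ s2 := by
            rw [SimpleGraph.deleteEdges_adj]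
            refine ⟨hadj2, ?_⟩
            rw [Set.mem_singleton_iff]
            intro h
            rcases Sym2.eq_iff.1 h with ⟨-, h2⟩ | ⟨h1, -⟩
            · exact hs12 h2.symm
            · exact hadj1.ne h1
          have hra := (hcomp p.2 hX2).2
          rw [hc2] at hra
          have htail : (T.deleteEdges {s(t₀, s1)}).Reachable s2 (bag (Sum.inl p.2)) :=
            reachAvoid_to_delete hra _ (Sym2.mem_mk_left _ _)
          exact Set.mem_biUnion (hstep.reachable.trans htail) (hbagmem _)
        · have hra := (hcomp p.1 hX1).2
          rw [hc1] at hra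
          have hr : (T.deleteEdges {s(s1, t₀)}).Reachable s1 (bag (Sum.inl p.1)) :=
            reachAvoid_to_delete hra _ (Sym2.mem_mk_right _ _)
          exact Set.mem_biUnion hr (hbagmem _)
    have hmain := hadhbound s1 hs1 extra hcond
    rw [hexcard, hV1card] at hmain
    have hmn : m * n ^ 2 = 4 * m ^ 3 := by rw [hn2]; ring
    rw [hmn] at hmain
    omega
  refine ⟨Vs s1, Vs s2, hVdisj s1 hs1 s2 hs2 hs12, ?_, by omega, by omega, hcut⟩
  · ext a
    simp only [Finset.mem_union, Finset.mem_univ, iff_true]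
    have := hcompSS a
    rw [hSSeq] at this
    simp only [Finset.mem_insert, Finset.mem_singleton] at this
    rcases this with h | h
    · exact Or.inl (h ▸ hpart a (hPempty a))
    · exact Or.inr (h ▸ hpart a (hPempty a))

end
end
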